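/- arXiv:1409.2813 — 3 statements merged into one kernel-verified Lean document; each statement's English description precedes it below -/
import Mathlib

section
/- Fix d > 1. Every sequence λ_n → ∞ of positive reals admits a subsequence λ_{n_k} along which the extended fixed points f_{λ_{n_k}} converge uniformly on ℝ to some continuous non-increasing function f : ℝ → [0,1], and any such sub-sequential limit solves the un-truncated cavity equation f(x) = exp(-d ∫_{-x}^{∞} (x+y)^{d-1} f(y) dy) for all x ∈ ℝ. -/
open MeasureTheory Set Filter

/-- The truncated cavity operator `T`. -/
noncomputable def T (d lam : ℝ) (f : ℝ → ℝ) : ℝ → ℝ :=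
  fun x => Real.exp (-(d * ∫ y in (-x)..lam, (x + y) ^ (d - 1) * f y))

/-- `f` is the fixed point of the truncated cavity operator on `[-λ, λ]`
(non-increasing and `[0,1]`-valued there), extended to `ℝ` by `1` on `(-∞, -λ]`
and `0` on `(λ, ∞)`. -/
def ExtFixedPoint (d lam : ℝ) (f : ℝ → ℝ) : Prop :=
  AntitoneOn f (Icc (-lam) lam) ∧
  (∀ x ∈ Icc (-lam) lam, f x ∈ Icc (0 : ℝ) 1) ∧
  (∀ x ≤ -lam, f x = 1) ∧ (∀ x > lam, f x = 0) ∧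
  (∀ x ∈ Icc (-lam) lam, T d lam f x = f x)

/-- `f : ℝ → [0,1]` is a measurable solution of the un-truncated Mézard–Parisi
cavity equation `f(x) = exp(-d ∫_{-x}^∞ (x+y)^{d-1} f(y) dy)`, the integrals
being (finite and) well-defined. -/
def SolvesCavity (d : ℝ) (f : ℝ → ℝ) : Prop :=
  Measurable f ∧ (∀ x : ℝ, f x ∈ Icc (0 : ℝ) 1) ∧
  (∀ x : ℝ, IntegrableOn (fun y => (x + y) ^ (d - 1) * f y) (Ioi (-x))) ∧
  (∀ x : ℝ, f x = Real.exp (-(d * ∫ y in Ioi (-x), (x + y) ^ (d - 1) * f y)))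

variable {d lam : ℝ} {f : ℝ → ℝ}

lemma efp_mem (h : ExtFixedPoint d lam f) (hlam : 0 < lam) (x : ℝ) :
    f x ∈ Icc (0:ℝ) 1 := by
  rcases le_or_gt x (-lam) with hx | hx
  · simp [h.2.2.1 x hx]
  rcases le_or_gt x lam with hx' | hx'
  · exact h.2.1 x ⟨hx.le, hx'⟩
  · simp [h.2.2.2.1 x hx']

lemma efp_antitone (h : ExtFixedPoint d lam f) (hlam : 0 < lam) : Antitone f := by
  intro x y hxy
  rcases le_or_gt x (-lam) with hx | hx
  · rw [h.2.2.1 x hx]; exact (efp_mem h hlam y).2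
  rcases lt_or_ge lam x with hx' | hx'
  · rw [h.2.2.2.1 x hx', h.2.2.2.1 y (hx'.trans_le hxy)]
  rcases le_or_gt y lam with hy | hy
  · exact h.1 ⟨hx.le, hx'⟩ ⟨hx.le.trans hxy, hy⟩ hxy
  · rw [h.2.2.2.1 y hy]; exact (efp_mem h hlam x).1

lemma efp_measurable (h : ExtFixedPoint d lam f) (hlam : 0 < lam) : Measurable f :=
  (efp_antitone h hlam).measurable

lemma cont_rpow_const {p : ℝ} (hp : 0 ≤ p) : Continuous fun t : ℝ => t ^ p :=
  continuous_iff_continuousAt.2 fun x => Real.continuousAt_rpow_const x p (Or.inr hp)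

lemma meas_kernel (hd : 1 < d) (hf : Measurable f) (x : ℝ) :
    Measurable fun t => (x + t) ^ (d - 1) * f t :=
  (((cont_rpow_const (by linarith)).comp (continuous_const.add continuous_id)).measurable).mul hf

lemma integrableOn_kernel_mul (hd : 1 < d) (hf : Measurable f)
    (hb : ∀ t, f t ∈ Icc (0:ℝ) 1) (x a b : ℝ) :
    IntegrableOn (fun t => (x + t) ^ (d - 1) * f t) (Ioc a b) := by
  apply Measure.integrableOn_of_bounded (M := (|x| + max |a| |b|) ^ (d - 1))
    (by simp) (meas_kernel hd hf x).aestronglyMeasurable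
  filter_upwards [ae_restrict_mem measurableSet_Ioc] with t ht
  have h1 : |(x + t) ^ (d - 1)| ≤ |x + t| ^ (d - 1) := Real.abs_rpow_le_abs_rpow _ _
  have h2 : |x + t| ≤ |x| + max |a| |b| := by
    refine (abs_add_le _ _).trans ?_
    gcongr
    rw [abs_le]
    exact ⟨le_trans (neg_le_neg (le_max_left |a| |b|)) (le_trans (neg_abs_le a) ht.1.le),
      le_trans ht.2 (le_trans (le_abs_self b) (le_max_right _ _))⟩
  calc ‖(x + t) ^ (d - 1) * f t‖ = |(x + t) ^ (d - 1)| * |f t| := abs_mul _ _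
    _ ≤ |x + t| ^ (d - 1) * 1 := by
        apply mul_le_mul h1 (abs_le.2 ⟨by linarith [(hb t).1], (hb t).2⟩) (abs_nonneg _)
          (Real.rpow_nonneg (abs_nonneg _) _)
    _ ≤ (|x| + max |a| |b|) ^ (d - 1) := by
        rw [mul_one]; exact Real.rpow_le_rpow (abs_nonneg _) h2 (by linarith)

lemma intervalIntegrable_kernel_mul (hd : 1 < d) (hf : Measurable f)
    (hb : ∀ t, f t ∈ Icc (0:ℝ) 1) (x a b : ℝ) :
    IntervalIntegrable (fun t => (x + t) ^ (d - 1) * f t) volume a b :=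
  intervalIntegrable_iff.2 (integrableOn_kernel_mul hd hf hb x _ _)

lemma efp_integrableOn_Ioi (hd : 1 < d) (h : ExtFixedPoint d lam f) (hlam : 0 < lam)
    (x : ℝ) : IntegrableOn (fun t => (x + t) ^ (d - 1) * f t) (Ioi (-x)) := by
  rcases le_or_gt (-x) lam with hx | hx
  · rw [← Ioc_union_Ioi_eq_Ioi hx]
    refine (integrableOn_kernel_mul hd (efp_measurable h hlam) (efp_mem h hlam) x _ _).union ?_
    refine integrableOn_zero.congr_fun (fun t ht => ?_) measurableSet_Ioi
    exact (by simp [h.2.2.2.1 t ht] : _ = (0:ℝ)).symm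
  · refine integrableOn_zero.congr_fun (fun t ht => ?_) measurableSet_Ioi
    exact (by simp [h.2.2.2.1 t (hx.trans ht)] : _ = (0:ℝ)).symm

lemma efp_integral_Ioi (hd : 1 < d) (h : ExtFixedPoint d lam f) (hlam : 0 < lam)
    {x : ℝ} (hx : -x ≤ lam) :
    (∫ y in (-x)..lam, (x + y) ^ (d - 1) * f y) = ∫ t in Ioi (-x), (x + t) ^ (d - 1) * f t := by
  rw [intervalIntegral.integral_of_le hx, ← Ioc_union_Ioi_eq_Ioi hx,
    setIntegral_union (Ioc_disjoint_Ioi le_rfl) measurableSet_Ioi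
      (integrableOn_kernel_mul hd (efp_measurable h hlam) (efp_mem h hlam) x _ _)
      (integrableOn_zero.congr_fun
        (fun t ht => (by simp [h.2.2.2.1 t ht] : _ = (0:ℝ)).symm) measurableSet_Ioi)]
  rw [setIntegral_congr_fun measurableSet_Ioi (fun t ht => by simp [h.2.2.2.1 t ht] : EqOn _ (fun _ => (0:ℝ)) _)]
  simp

lemma efp_eq (hd : 1 < d) (h : ExtFixedPoint d lam f) (hlam : 0 < lam)
    {x : ℝ} (hx : x ∈ Icc (-lam) lam) :
    f x = Real.exp (-(d * ∫ t in Ioi (-x), (x + t) ^ (d - 1) * f t)) := by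
  rw [← h.2.2.2.2 x hx, T, efp_integral_Ioi hd h hlam (by linarith [hx.1])]
section
variable {d lam b a : ℝ} {f : ℝ → ℝ}

lemma cont_rpow_const' {p : ℝ} (hp : 0 ≤ p) : Continuous fun t : ℝ => t ^ p :=
  continuous_iff_continuousAt.2 fun x => Real.continuousAt_rpow_const x p (Or.inr hp)

lemma tail_hasDeriv (hd : 1 < d) (hb : 0 < b) (t : ℝ) :
    HasDerivAt (fun t => -(1/(d*b)) * Real.exp (-(b * t ^ d)))
      (t ^ (d-1) * Real.exp (-(b * t ^ d))) t := by
  have h1 : HasDerivAt (fun s : ℝ => s ^ d) (d * t ^ (d-1)) t :=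
    Real.hasDerivAt_rpow_const (Or.inr hd.le)
  have h2 := (((h1.const_mul b).neg).exp).const_mul (-(1/(d*b)))
  simp only [Pi.neg_apply] at h2
  refine h2.congr_deriv ?_
  have hd0 : d ≠ 0 := by positivity
  field_simp

lemma tail_cont (hd : 1 < d) : Continuous fun t : ℝ => t ^ (d-1) * Real.exp (-(b * t ^ d)) :=
  (cont_rpow_const' (by linarith)).mul
    (Real.continuous_exp.comp ((continuous_const.mul (cont_rpow_const' (by linarith))).neg))

lemma tail_tendsto (hd : 1 < d) (hb : 0 < b) :
    Tendsto (fun t : ℝ => -(1/(d*b)) * Real.exp (-(b * t ^ d))) atTop (nhds 0) := by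
  have h1 : Tendsto (fun t : ℝ => b * t ^ d) atTop atTop :=
    (tendsto_rpow_atTop (by linarith)).const_mul_atTop hb
  have h2 : Tendsto (fun t : ℝ => Real.exp (-(b * t ^ d))) atTop (nhds 0) :=
    Real.tendsto_exp_atBot.comp (tendsto_neg_atTop_atBot.comp h1)
  simpa using h2.const_mul (-(1/(d*b)))

lemma tail_integrable (hd : 1 < d) (hb : 0 < b) (a : ℝ) :
    IntegrableOn (fun t => t ^ (d-1) * Real.exp (-(b * t ^ d))) (Ioi a) := by
  rcases le_or_gt 0 a with ha | ha
  · exact integrableOn_Ioi_deriv_of_nonneg ((tail_hasDeriv hd hb a).continuousAt.continuousWithinAt)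
      (fun x _ => tail_hasDeriv hd hb x)
      (fun x hx => mul_nonneg (Real.rpow_nonneg (le_trans ha hx.le) _) (Real.exp_pos _).le)
      (tail_tendsto hd hb)
  · rw [← Ioc_union_Ioi_eq_Ioi ha.le]
    refine IntegrableOn.union ?_ ?_
    · exact (tail_cont hd (b := b)).integrableOn_Ioc
    · exact integrableOn_Ioi_deriv_of_nonneg ((tail_hasDeriv hd hb 0).continuousAt.continuousWithinAt)
        (fun x hx => tail_hasDeriv hd hb x)
        (fun x hx => mul_nonneg (Real.rpow_nonneg hx.le _) (Real.exp_pos _).le)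
        (tail_tendsto hd hb)

lemma tail_integral (hd : 1 < d) (hb : 0 < b) (ha : 0 ≤ a) :
    ∫ t in Ioi a, t ^ (d-1) * Real.exp (-(b * t ^ d)) = (1/(d*b)) * Real.exp (-(b * a ^ d)) := by
  rw [integral_Ioi_of_hasDerivAt_of_nonneg ((tail_hasDeriv hd hb a).continuousAt.continuousWithinAt)
      (fun x _ => tail_hasDeriv hd hb x)
      (fun x hx => mul_nonneg (Real.rpow_nonneg (le_trans ha hx.le) _) (Real.exp_pos _).le)
      (tail_tendsto hd hb)]
  ring

end

section
variable {d lam : ℝ} {f : ℝ → ℝ}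

lemma efp_at_zero (hd : 1 < d) (h : ExtFixedPoint d lam f) (hlam : 0 < lam) :
    f 0 = Real.exp (-(d * ∫ s in (0:ℝ)..lam, s ^ (d - 1) * f s)) := by
  have := h.2.2.2.2 0 ⟨by linarith, hlam.le⟩
  rw [T] at this
  rw [← this]
  norm_num

lemma intervalIntegrable_pure (hd : 1 < d) (hf : Measurable f)
    (hb : ∀ t, f t ∈ Icc (0:ℝ) 1) (a b : ℝ) :
    IntervalIntegrable (fun s => s ^ (d - 1) * f s) volume a b := by
  simpa only [zero_add] using intervalIntegrable_kernel_mul hd hf hb 0 a b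

lemma fixed_upper (hd : 1 < d) (h : ExtFixedPoint d lam f) (hlam : 0 < lam)
    {t : ℝ} (ht : t ∈ Icc 0 lam) :
    f t ≤ f 0 * Real.exp (-(f 0 * t ^ d)) := by
  have hmem := efp_mem h hlam
  have hmeas := efp_measurable h hlam
  have hanti := efp_antitone h hlam
  have hd0 : d ≠ 0 := by positivity
  have key : f t = Real.exp (-(d * ∫ s in (-t)..lam, (t + s) ^ (d - 1) * f s)) :=
    (h.2.2.2.2 t ⟨by linarith [ht.1], ht.2⟩).symm
  have hI1 : IntervalIntegrable (fun s => (t + s) ^ (d - 1) * f s) volume (-t) 0 :=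
    intervalIntegrable_kernel_mul hd hmeas hmem t _ _
  have hI2 : IntervalIntegrable (fun s => (t + s) ^ (d - 1) * f s) volume 0 lam :=
    intervalIntegrable_kernel_mul hd hmeas hmem t _ _
  have split : (∫ s in (-t)..lam, (t + s) ^ (d - 1) * f s) =
      (∫ s in (-t)..0, (t + s) ^ (d - 1) * f s) + ∫ s in (0:ℝ)..lam, (t + s) ^ (d - 1) * f s :=
    (intervalIntegral.integral_add_adjacent_intervals hI1 hI2).symm
  -- lower bound on the first piece
  have base : (∫ s in (-t)..0, (t + s) ^ (d - 1)) = t ^ d / d := by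
    have comp : (∫ s in (-t)..0, (t + s) ^ (d - 1)) = ∫ u in (0:ℝ)..t, u ^ (d - 1) := by
      have := intervalIntegral.integral_comp_add_right (a := -t) (b := 0)
        (fun u : ℝ => u ^ (d - 1)) t
      simp only [neg_add_cancel, zero_add] at this
      rw [← this]
      congr 1
      ext s
      rw [add_comm]
    rw [comp, integral_rpow (Or.inl (by linarith))]
    rw [Real.zero_rpow (by intro hh; apply hd0; linarith [hh ▸ (rfl : d - 1 + 1 = d - 1 + 1)] : d - 1 + 1 ≠ 0)]
    rw [(by ring : d - 1 + 1 = d)]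
    ring
  have hlow1 : f 0 * (t ^ d / d) ≤ ∫ s in (-t)..0, (t + s) ^ (d - 1) * f s := by
    have hle : (∫ s in (-t)..0, (t + s) ^ (d - 1) * f 0) ≤ ∫ s in (-t)..0, (t + s) ^ (d - 1) * f s := by
      apply intervalIntegral.integral_mono_on (by linarith [ht.1])
      · exact (((cont_rpow_const (by linarith : (0:ℝ) ≤ d - 1)).comp
          (continuous_const.add continuous_id)).mul continuous_const).intervalIntegrable _ _
      · exact hI1
      · intro s hs
        refine mul_le_mul_of_nonneg_left (hanti hs.2) (Real.rpow_nonneg (by linarith [hs.1]) _)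
    calc f 0 * (t ^ d / d) = (∫ s in (-t)..0, (t + s) ^ (d - 1)) * f 0 := by rw [base]; ring
      _ = ∫ s in (-t)..0, (t + s) ^ (d - 1) * f 0 := (intervalIntegral.integral_mul_const _ _).symm
      _ ≤ _ := hle
  have hlow2 : (∫ s in (0:ℝ)..lam, s ^ (d - 1) * f s) ≤ ∫ s in (0:ℝ)..lam, (t + s) ^ (d - 1) * f s := by
    apply intervalIntegral.integral_mono_on hlam.le (intervalIntegrable_pure hd hmeas hmem 0 lam) hI2
    intro s hs
    exact mul_le_mul_of_nonneg_right
      (Real.rpow_le_rpow hs.1 (by linarith [ht.1]) (by linarith)) (hmem s).1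
  rw [key]
  calc Real.exp (-(d * ∫ s in (-t)..lam, (t + s) ^ (d - 1) * f s))
      ≤ Real.exp (-(d * (f 0 * (t ^ d / d) + ∫ s in (0:ℝ)..lam, s ^ (d - 1) * f s))) := by
        apply Real.exp_le_exp.2
        apply neg_le_neg
        apply mul_le_mul_of_nonneg_left _ (by linarith)
        rw [split]
        exact add_le_add hlow1 hlow2
    _ = Real.exp (-(d * ∫ s in (0:ℝ)..lam, s ^ (d - 1) * f s)) * Real.exp (-(f 0 * t ^ d)) := by
        rw [← Real.exp_add]
        congr 1
        field_simp
        ring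
    _ = f 0 * Real.exp (-(f 0 * t ^ d)) := by rw [← efp_at_zero hd h hlam]

lemma exp_neg_one_le (hd : 1 < d) (h : ExtFixedPoint d lam f) (hlam : 0 < lam) :
    Real.exp (-1) ≤ f 0 := by
  have hmem := efp_mem h hlam
  have hmeas := efp_measurable h hlam
  have hd0 : d ≠ 0 := by positivity
  set c := f 0 with hc
  have hc0 : 0 ≤ c := (hmem 0).1
  -- FTC evaluation of the comparison integral
  have hderiv : ∀ s : ℝ, HasDerivAt (fun s => -(1/d) * Real.exp (-(c * s ^ d)))
      (s ^ (d - 1) * (c * Real.exp (-(c * s ^ d)))) s := by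
    intro s
    have h1 : HasDerivAt (fun u : ℝ => u ^ d) (d * s ^ (d - 1)) s :=
      Real.hasDerivAt_rpow_const (Or.inr hd.le)
    have h2 := (((h1.const_mul c).neg).exp).const_mul (-(1/d))
    simp only [Pi.neg_apply] at h2
    refine h2.congr_deriv ?_
    field_simp
  have hcont2 : Continuous fun s : ℝ => s ^ (d - 1) * (c * Real.exp (-(c * s ^ d))) :=
    (cont_rpow_const (by linarith)).mul (continuous_const.mul
      (Real.continuous_exp.comp ((continuous_const.mul (cont_rpow_const (by linarith))).neg)))
  have ftc : (∫ s in (0:ℝ)..lam, s ^ (d - 1) * (c * Real.exp (-(c * s ^ d)))) =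
      (1 - Real.exp (-(c * lam ^ d))) / d := by
    rw [intervalIntegral.integral_eq_sub_of_hasDerivAt (fun s _ => hderiv s)
      (hcont2.intervalIntegrable _ _)]
    rw [Real.zero_rpow hd0]
    norm_num
    ring
  have hmono : (∫ s in (0:ℝ)..lam, s ^ (d - 1) * f s)
      ≤ ∫ s in (0:ℝ)..lam, s ^ (d - 1) * (c * Real.exp (-(c * s ^ d))) := by
    apply intervalIntegral.integral_mono_on hlam.le (intervalIntegrable_pure hd hmeas hmem 0 lam)
      (hcont2.intervalIntegrable _ _)
    intro s hs
    exact mul_le_mul_of_nonneg_left (fixed_upper hd h hlam hs) (Real.rpow_nonneg hs.1 _)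
  have hfin : d * (∫ s in (0:ℝ)..lam, s ^ (d - 1) * f s) ≤ 1 := by
    calc d * (∫ s in (0:ℝ)..lam, s ^ (d - 1) * f s)
        ≤ d * ((1 - Real.exp (-(c * lam ^ d))) / d) := by
          rw [← ftc]; exact mul_le_mul_of_nonneg_left hmono (by linarith)
      _ = 1 - Real.exp (-(c * lam ^ d)) := by field_simp
      _ ≤ 1 := by linarith [Real.exp_pos (-(c * lam ^ d))]
  rw [hc, efp_at_zero hd h hlam]
  exact Real.exp_le_exp.2 (by linarith)

lemma efp_upper (hd : 1 < d) (h : ExtFixedPoint d lam f) (hlam : 0 < lam)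
    {t : ℝ} (ht : 0 ≤ t) :
    f t ≤ Real.exp (-(Real.exp (-1) * t ^ d)) := by
  rcases le_or_gt t lam with htl | htl
  · calc f t ≤ f 0 * Real.exp (-(f 0 * t ^ d)) := fixed_upper hd h hlam ⟨ht, htl⟩
      _ ≤ 1 * Real.exp (-(Real.exp (-1) * t ^ d)) := by
          apply mul_le_mul (efp_mem h hlam 0).2 _ (Real.exp_pos _).le zero_le_one
          apply Real.exp_le_exp.2
          apply neg_le_neg
          exact mul_le_mul_of_nonneg_right (exp_neg_one_le hd h hlam) (Real.rpow_nonneg ht _)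
      _ = Real.exp (-(Real.exp (-1) * t ^ d)) := one_mul _
  · rw [h.2.2.2.1 t htl]
    exact (Real.exp_pos _).le

lemma efp_lower (hd : 1 < d) (h : ExtFixedPoint d lam f) (hlam : 0 < lam)
    {x : ℝ} (hx : x ≤ 0) :
    Real.exp (-(Real.exp 1 * Real.exp (-(Real.exp (-1) * (-x) ^ d)))) ≤ f x := by
  have hb : (0:ℝ) < Real.exp (-1) := Real.exp_pos _
  have hd0 : (0:ℝ) < d := by positivity
  rcases le_or_gt x (-lam) with hxl | hxl
  · rw [h.2.2.1 x hxl]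
    rw [Real.exp_le_one_iff]
    simp only [neg_nonpos]
    positivity
  · have hxI : x ∈ Icc (-lam) lam := ⟨hxl.le, by linarith⟩
    rw [efp_eq hd h hlam hxI]
    apply Real.exp_le_exp.2
    apply neg_le_neg
    have hmono : (∫ t in Ioi (-x), (x + t) ^ (d - 1) * f t)
        ≤ ∫ t in Ioi (-x), t ^ (d - 1) * Real.exp (-(Real.exp (-1) * t ^ d)) := by
      apply setIntegral_mono_on (efp_integrableOn_Ioi hd h hlam x)
        (tail_integrable hd hb (-x)) measurableSet_Ioi
      intro t htx
      have ht0 : 0 ≤ t := le_trans (by linarith) (le_of_lt htx)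
      apply mul_le_mul (Real.rpow_le_rpow (by linarith [mem_Ioi.1 htx]) (by linarith) (by linarith))
        (efp_upper hd h hlam ht0) (efp_mem h hlam t).1 (Real.rpow_nonneg ht0 _)
    calc d * (∫ t in Ioi (-x), (x + t) ^ (d - 1) * f t)
        ≤ d * ((1/(d * Real.exp (-1))) * Real.exp (-(Real.exp (-1) * (-x) ^ d))) := by
          rw [← tail_integral hd hb (by linarith : (0:ℝ) ≤ -x)]
          exact mul_le_mul_of_nonneg_left hmono hd0.le
      _ = Real.exp 1 * Real.exp (-(Real.exp (-1) * (-x) ^ d)) := by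
          rw [Real.exp_neg]
          field_simp

end

noncomputable def bnd (d : ℝ) : ℝ → ℝ :=
  fun t => if t ≤ 0 then 1 else Real.exp (-(Real.exp (-1) * t ^ d))

lemma bnd_measurable {d : ℝ} (hd : 1 < d) : Measurable (bnd d) := by
  apply Measurable.ite measurableSet_Iic measurable_const
  exact (Real.continuous_exp.comp
    ((continuous_const.mul (cont_rpow_const (by linarith : (0:ℝ) ≤ d))).neg)).measurable

lemma bnd_mem {d : ℝ} (t : ℝ) : bnd d t ∈ Icc (0:ℝ) 1 := by
  unfold bnd
  split_ifs with h
  · exact ⟨zero_le_one, le_refl 1⟩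
  · push_neg at h
    refine ⟨(Real.exp_pos _).le, Real.exp_le_one_iff.2 ?_⟩
    simp only [neg_nonpos]
    positivity

lemma efp_le_bnd {d lam : ℝ} {f : ℝ → ℝ} (hd : 1 < d) (h : ExtFixedPoint d lam f)
    (hlam : 0 < lam) (t : ℝ) : f t ≤ bnd d t := by
  unfold bnd
  split_ifs with ht
  · exact (efp_mem h hlam t).2
  · exact efp_upper hd h hlam (by linarith)

lemma dominator_integrable {d : ℝ} (hd : 1 < d) (x : ℝ) :
    IntegrableOn (fun t => (x + t) ^ (d - 1) * bnd d t) (Ioi (-x)) := by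
  have hb : (0:ℝ) < Real.exp (-1) := Real.exp_pos _
  have hT : -x ≤ |x| + 1 := by cases abs_cases x <;> linarith
  rw [← Ioc_union_Ioi_eq_Ioi hT]
  refine (integrableOn_kernel_mul hd (bnd_measurable hd) bnd_mem x _ _).union ?_
  apply Integrable.mono' (((tail_integrable hd hb (|x| + 1)).const_mul ((|x| + 1) ^ (d - 1))))
  · exact (meas_kernel hd (bnd_measurable hd) x).aestronglyMeasurable
  · filter_upwards [ae_restrict_mem measurableSet_Ioi] with t ht
    have ht1 : (1:ℝ) < t := lt_of_le_of_lt (by linarith [abs_nonneg x]) ht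
    have hxt : 0 ≤ x + t := by cases abs_cases x <;> [linarith [mem_Ioi.1 ht]; linarith [mem_Ioi.1 ht]]
    have hbt : bnd d t = Real.exp (-(Real.exp (-1) * t ^ d)) := if_neg (by linarith)
    have hker : (x + t) ^ (d - 1) ≤ (|x| + 1) ^ (d - 1) * t ^ (d - 1) := by
      rw [← Real.mul_rpow (by positivity) (by linarith)]
      apply Real.rpow_le_rpow hxt _ (by linarith)
      have : |x| ≤ |x| * t := le_mul_of_one_le_right (abs_nonneg x) ht1.le
      calc x + t ≤ |x| + t := by linarith [le_abs_self x]
        _ ≤ (|x| + 1) * t := by nlinarith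
    rw [Real.norm_eq_abs, abs_of_nonneg (mul_nonneg (Real.rpow_nonneg hxt _) (bnd_mem t).1)]
    rw [hbt]
    calc (x + t) ^ (d - 1) * Real.exp (-(Real.exp (-1) * t ^ d))
        ≤ ((|x| + 1) ^ (d - 1) * t ^ (d - 1)) * Real.exp (-(Real.exp (-1) * t ^ d)) :=
          mul_le_mul_of_nonneg_right hker (Real.exp_pos _).le
      _ = (|x| + 1) ^ (d - 1) * (t ^ (d - 1) * Real.exp (-(Real.exp (-1) * t ^ d))) := by ring

lemma integral_tendsto {d : ℝ} (hd : 1 < d) {G : ℕ → ℝ → ℝ} {g : ℝ → ℝ} (x : ℝ)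
    (hGm : ∀ k, Measurable (G k)) (hGb : ∀ k t, G k t ∈ Icc (0:ℝ) 1)
    (hGbnd : ∀ k t, G k t ≤ bnd d t)
    (hconv : ∀ᵐ t ∂(volume.restrict (Ioi (-x))), Tendsto (fun k => G k t) atTop (nhds (g t))) :
    Tendsto (fun k => ∫ t in Ioi (-x), (x + t) ^ (d - 1) * G k t) atTop
      (nhds (∫ t in Ioi (-x), (x + t) ^ (d - 1) * g t)) := by
  apply tendsto_integral_filter_of_dominated_convergence (fun t => (x + t) ^ (d - 1) * bnd d t)
  · exact Eventually.of_forall fun k => (meas_kernel hd (hGm k) x).aestronglyMeasurable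
  · apply Eventually.of_forall
    intro k
    filter_upwards [ae_restrict_mem measurableSet_Ioi] with t ht
    have hxt : 0 ≤ x + t := by linarith [mem_Ioi.1 ht]
    rw [Real.norm_eq_abs, abs_of_nonneg (mul_nonneg (Real.rpow_nonneg hxt _) (hGb k t).1)]
    exact mul_le_mul_of_nonneg_left (hGbnd k t) (Real.rpow_nonneg hxt _)
  · exact dominator_integrable hd x
  · filter_upwards [hconv] with t ht
    exact Tendsto.const_mul _ ht

lemma part2 {d : ℝ} (hd : 1 < d) (lam : ℕ → ℝ) (hpos : ∀ n, 0 < lam n)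
    (hlim : Tendsto lam atTop atTop) (F : ℕ → ℝ → ℝ)
    (hF : ∀ n, ExtFixedPoint d (lam n) (F n))
    (φ : ℕ → ℕ) (hφ : StrictMono φ) (f : ℝ → ℝ) (hcont : Continuous f)
    (hmem : ∀ x, f x ∈ Icc (0:ℝ) 1) (hunif : TendstoUniformly (fun k => F (φ k)) f atTop) :
    SolvesCavity d f := by
  have hpt : ∀ x, Tendsto (fun k => F (φ k) x) atTop (nhds (f x)) := fun x => hunif.tendsto_at x
  have hfbnd : ∀ t, f t ≤ bnd d t := fun t => le_of_tendsto (hpt t)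
    (Eventually.of_forall fun k => efp_le_bnd hd (hF _) (hpos _) t)
  have hlamφ : Tendsto (fun k => lam (φ k)) atTop atTop := hlim.comp hφ.tendsto_atTop
  refine ⟨hcont.measurable, hmem, ?_, ?_⟩
  · intro x
    apply Integrable.mono' (dominator_integrable hd x)
      (meas_kernel hd hcont.measurable x).aestronglyMeasurable
    filter_upwards [ae_restrict_mem measurableSet_Ioi] with t ht
    have hxt : 0 ≤ x + t := by linarith [mem_Ioi.1 ht]
    rw [Real.norm_eq_abs, abs_of_nonneg (mul_nonneg (Real.rpow_nonneg hxt _) (hmem t).1)]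
    exact mul_le_mul_of_nonneg_left (hfbnd t) (Real.rpow_nonneg hxt _)
  · intro x
    have h2 : Tendsto (fun k => ∫ t in Ioi (-x), (x + t) ^ (d - 1) * F (φ k) t) atTop
        (nhds (∫ t in Ioi (-x), (x + t) ^ (d - 1) * f t)) :=
      integral_tendsto hd x (fun k => efp_measurable (hF _) (hpos _))
        (fun k t => efp_mem (hF _) (hpos _) t)
        (fun k t => efp_le_bnd hd (hF _) (hpos _) t)
        (Eventually.of_forall fun t => hpt t)
    have h3 := (Real.continuous_exp.tendsto _).comp ((h2.const_mul d).neg)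
    have h4 : Tendsto (fun k => F (φ k) x) atTop
        (nhds (Real.exp (-(d * ∫ t in Ioi (-x), (x + t) ^ (d - 1) * f t)))) := by
      apply h3.congr'
      filter_upwards [hlamφ.eventually (eventually_ge_atTop |x|)] with k hk
      exact (efp_eq hd (hF _) (hpos _)
        ⟨by linarith [neg_abs_le x], by linarith [le_abs_self x]⟩).symm
    exact tendsto_nhds_unique (hpt x) h4

section part1
variable {d : ℝ}

lemma extract_subseq (lam : ℕ → ℝ) (hpos : ∀ n, 0 < lam n) (F : ℕ → ℝ → ℝ)
    (hF : ∀ n, ExtFixedPoint d (lam n) (F n)) :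
    ∃ φ : ℕ → ℕ, StrictMono φ ∧ ∃ g : ℚ → ℝ,
      ∀ q : ℚ, Tendsto (fun k => F (φ k) (q : ℝ)) atTop (nhds (g q)) := by
  let G : ℕ → ℚ → Icc (0:ℝ) 1 := fun n q => ⟨F n q, efp_mem (hF n) (hpos n) q⟩
  obtain ⟨a, -, φ, hφ, ha⟩ :=
    (isCompact_univ (X := ℚ → Icc (0:ℝ) 1)).tendsto_subseq (fun n => mem_univ (G n))
  refine ⟨φ, hφ, fun q => (a q : ℝ), fun q => ?_⟩
  exact (continuous_subtype_val.tendsto _).comp (tendsto_pi_nhds.1 ha q)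

noncomputable def hellyLim (g : ℚ → ℝ) : ℝ → ℝ :=
  fun x => sSup ((fun q : ℚ => g q) '' {q : ℚ | x < (q : ℝ)})

variable {g : ℚ → ℝ}

lemma hellyLim_ne (x : ℝ) : ((fun q : ℚ => g q) '' {q : ℚ | x < (q : ℝ)}).Nonempty := by
  obtain ⟨q, hq⟩ := exists_rat_gt x
  exact ⟨g q, ⟨q, hq, rfl⟩⟩

lemma hellyLim_bdd (gmem : ∀ q, g q ∈ Icc (0:ℝ) 1) (x : ℝ) :
    BddAbove ((fun q : ℚ => g q) '' {q : ℚ | x < (q : ℝ)}) := by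
  refine ⟨1, fun y hy => ?_⟩
  obtain ⟨q, -, rfl⟩ := hy
  exact (gmem q).2

lemma le_hellyLim (gmem : ∀ q, g q ∈ Icc (0:ℝ) 1) {x : ℝ} {q : ℚ} (hq : x < (q:ℝ)) :
    g q ≤ hellyLim g x :=
  le_csSup (hellyLim_bdd gmem x) ⟨q, hq, rfl⟩

lemma hellyLim_le (gmem : ∀ q, g q ∈ Icc (0:ℝ) 1) {x y : ℝ}
    (hy : ∀ q : ℚ, x < (q:ℝ) → g q ≤ y) : hellyLim g x ≤ y := by
  apply csSup_le (hellyLim_ne x)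
  rintro z ⟨q, hq, rfl⟩
  exact hy q hq

lemma hellyLim_antitone (gmem : ∀ q, g q ∈ Icc (0:ℝ) 1) : Antitone (hellyLim g) := by
  intro x y hxy
  exact hellyLim_le gmem fun q hq => le_hellyLim gmem (lt_of_le_of_lt hxy hq)

lemma hellyLim_mem (gmem : ∀ q, g q ∈ Icc (0:ℝ) 1) (x : ℝ) :
    hellyLim g x ∈ Icc (0:ℝ) 1 := by
  obtain ⟨q, hq⟩ := exists_rat_gt x
  exact ⟨le_trans (gmem q).1 (le_hellyLim gmem hq),
    hellyLim_le gmem fun q _ => (gmem q).2⟩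

lemma hellyLim_le_bnd (hd : 1 < d) (gmem : ∀ q, g q ∈ Icc (0:ℝ) 1)
    (gub : ∀ q : ℚ, 0 ≤ (q:ℝ) → g q ≤ Real.exp (-(Real.exp (-1) * (q:ℝ) ^ d))) (t : ℝ) :
    hellyLim g t ≤ bnd d t := by
  unfold bnd
  split_ifs with ht
  · exact (hellyLim_mem gmem t).2
  · push_neg at ht
    apply hellyLim_le gmem
    intro q hq
    calc g q ≤ Real.exp (-(Real.exp (-1) * (q:ℝ) ^ d)) := gub q (by linarith)
      _ ≤ Real.exp (-(Real.exp (-1) * t ^ d)) := by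
          apply Real.exp_le_exp.2
          apply neg_le_neg
          exact mul_le_mul_of_nonneg_left
            (Real.rpow_le_rpow ht.le hq.le (by linarith)) (Real.exp_pos _).le

lemma helly_tendsto {F : ℕ → ℝ → ℝ}
    (hanti : ∀ k, Antitone (F k))
    (hg : ∀ q : ℚ, Tendsto (fun k => F k (q : ℝ)) atTop (nhds (g q)))
    (gmem : ∀ q, g q ∈ Icc (0:ℝ) 1) {x : ℝ}
    (hcont : ContinuousAt (hellyLim g) x) :
    Tendsto (fun k => F k x) atTop (nhds (hellyLim g x)) := by
  apply tendsto_order.2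
  constructor
  · intro y hy
    obtain ⟨z, ⟨q, hq, rfl⟩, hz⟩ := exists_lt_of_lt_csSup (hellyLim_ne x) hy
    filter_upwards [(hg q).eventually (eventually_gt_nhds hz)] with k hk
    exact lt_of_lt_of_le hk (hanti k hq.le)
  · intro y hy
    have hmem : {x' : ℝ | hellyLim g x' < y} ∈ nhds x := hcont (Iio_mem_nhds hy)
    obtain ⟨δ, hδ, hball⟩ := Metric.mem_nhds_iff.1 hmem
    obtain ⟨p', hp'1, hp'2⟩ := exists_rat_btwn (by linarith : x - δ < x)
    obtain ⟨p, hp1, hp2⟩ := exists_rat_btwn hp'2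
    have hgp : g p < y := by
      have h1 : g p ≤ hellyLim g (p' : ℝ) := le_hellyLim gmem hp1
      have h2 : hellyLim g (p' : ℝ) < y := by
        apply hball
        rw [Metric.mem_ball, Real.dist_eq, abs_lt]
        constructor <;> linarith
      linarith
    filter_upwards [(hg p).eventually (eventually_lt_nhds hgp)] with k hk
    exact lt_of_le_of_lt (hanti k (le_of_lt hp2)) hk
end part1

noncomputable def flim (d : ℝ) (g : ℚ → ℝ) : ℝ → ℝ :=
  fun x => Real.exp (-(d * ∫ t in Ioi (-x), (x + t) ^ (d - 1) * hellyLim g t))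

section part1b
variable {d : ℝ} {g : ℚ → ℝ}

lemma hellyLim_measurable (gmem : ∀ q, g q ∈ Icc (0:ℝ) 1) : Measurable (hellyLim g) :=
  (hellyLim_antitone gmem).measurable

lemma flim_continuous (hd : 1 < d) (gmem : ∀ q, g q ∈ Icc (0:ℝ) 1)
    (gub : ∀ q : ℚ, 0 ≤ (q:ℝ) → g q ≤ Real.exp (-(Real.exp (-1) * (q:ℝ) ^ d))) :
    Continuous (flim d g) := by
  have hbd : ∀ t, hellyLim g t ≤ bnd d t := hellyLim_le_bnd hd gmem gub
  have hJ : Continuous fun x => ∫ t in Ioi (-x), (x + t) ^ (d - 1) * hellyLim g t := by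
    rw [continuous_iff_continuousAt]
    intro x₀
    have hK : ContinuousAt (fun x => ∫ t,
        (Ioi (-x)).indicator (fun t => (x + t) ^ (d - 1) * hellyLim g t) t) x₀ := by
      apply continuousAt_of_dominated (bound := (Ioi (-(x₀+1))).indicator
        (fun t => (x₀ + 1 + t) ^ (d - 1) * bnd d t))
      · exact Eventually.of_forall fun x =>
          ((meas_kernel hd (hellyLim_measurable gmem) x).indicator
            measurableSet_Ioi).aestronglyMeasurable
      · filter_upwards [Metric.ball_mem_nhds x₀ one_pos] with x hx
        apply Eventually.of_forall
        intro t
        rw [Metric.mem_ball, Real.dist_eq, abs_lt] at hx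
        by_cases ht : t ∈ Ioi (-x)
        · have ht' : t ∈ Ioi (-(x₀ + 1)) := by
            rw [mem_Ioi] at ht ⊢; linarith
          rw [indicator_of_mem ht, indicator_of_mem ht']
          have hxt : 0 ≤ x + t := by linarith [mem_Ioi.1 ht]
          rw [Real.norm_eq_abs,
            abs_of_nonneg (mul_nonneg (Real.rpow_nonneg hxt _)
              (le_trans (hellyLim_mem gmem t).1 (le_refl _)))]
          apply mul_le_mul (Real.rpow_le_rpow hxt (by linarith) (by linarith))
            (hbd t) (hellyLim_mem gmem t).1 (Real.rpow_nonneg (by linarith) _)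
        · rw [indicator_of_notMem ht]
          simp only [norm_zero]
          apply indicator_nonneg
          intro s hs
          exact mul_nonneg (Real.rpow_nonneg (by linarith [mem_Ioi.1 hs]) _) (bnd_mem s).1
      · exact (integrable_indicator_iff measurableSet_Ioi).2 (dominator_integrable hd (x₀ + 1))
      · have hne : ∀ᵐ t : ℝ, t ≠ -x₀ := by
          rw [ae_iff]
          have : {t : ℝ | ¬ t ≠ -x₀} = {-x₀} := by ext t; simp
          rw [this]
          exact measure_singleton _
        filter_upwards [hne] with t ht
        rcases lt_or_gt_of_ne ht with htl | htg
        · -- t < -x₀ : locally zero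
          apply ContinuousAt.congr (continuousAt_const (y := (0:ℝ)))
          filter_upwards [Metric.ball_mem_nhds x₀ (by linarith : (0:ℝ) < -x₀ - t)] with x hx
          rw [Metric.mem_ball, Real.dist_eq, abs_lt] at hx
          rw [indicator_of_notMem (by rw [mem_Ioi]; push_neg; linarith)]
        · -- t > -x₀ : locally the smooth function
          apply ContinuousAt.congr
            (f := fun x => (x + t) ^ (d - 1) * hellyLim g t)
          · exact (((cont_rpow_const (by linarith : (0:ℝ) ≤ d - 1)).comp
              (continuous_id.add continuous_const)).mul continuous_const).continuousAt
          · filter_upwards [Metric.ball_mem_nhds x₀ (by linarith : (0:ℝ) < t + x₀)] with x hx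
            rw [Metric.mem_ball, Real.dist_eq, abs_lt] at hx
            rw [indicator_of_mem (by rw [mem_Ioi]; linarith)]
    simpa only [integral_indicator measurableSet_Ioi] using hK
  exact Real.continuous_exp.comp ((continuous_const.mul hJ).neg)
end part1b

lemma polya {d : ℝ} (hd : 1 < d) (Fk : ℕ → ℝ → ℝ) (f : ℝ → ℝ)
    (hfc : Continuous f)
    (hFanti : ∀ k, Antitone (Fk k)) (hFmem : ∀ k t, Fk k t ∈ Icc (0:ℝ) 1)
    (hFub : ∀ k t, 0 ≤ t → Fk k t ≤ Real.exp (-(Real.exp (-1) * t ^ d)))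
    (hFlb : ∀ k x, x ≤ 0 →
      Real.exp (-(Real.exp 1 * Real.exp (-(Real.exp (-1) * (-x) ^ d)))) ≤ Fk k x)
    (hfub : ∀ t, 0 ≤ t → f t ≤ Real.exp (-(Real.exp (-1) * t ^ d)))
    (hflb : ∀ x, x ≤ 0 →
      Real.exp (-(Real.exp 1 * Real.exp (-(Real.exp (-1) * (-x) ^ d)))) ≤ f x)
    (hfmem : ∀ t, f t ∈ Icc (0:ℝ) 1)
    (hpt : ∀ x, Tendsto (fun k => Fk k x) atTop (nhds (f x))) :
    TendstoUniformly Fk f atTop := by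
  rw [Metric.tendstoUniformly_iff]
  intro ε hε
  have hb : (0:ℝ) < Real.exp (-1) := Real.exp_pos _
  set ε' := ε / 3 with hε'def
  have hε' : 0 < ε' := by positivity
  -- choose the tail threshold A
  have h1 : Tendsto (fun t : ℝ => Real.exp (-(Real.exp (-1) * t ^ d))) atTop (nhds 0) :=
    Real.tendsto_exp_atBot.comp (tendsto_neg_atTop_atBot.comp
      ((tendsto_rpow_atTop (by linarith)).const_mul_atTop hb))
  have h2 : Tendsto (fun t : ℝ =>
      Real.exp (-(Real.exp 1 * Real.exp (-(Real.exp (-1) * t ^ d))))) atTop (nhds 1) := by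
    have h4 := (Real.continuous_exp.tendsto _).comp ((h1.const_mul (Real.exp 1)).neg)
    simpa [Function.comp_def] using h4
  obtain ⟨A, hA1, hA2, hA3⟩ := (((h1.eventually (eventually_lt_nhds hε')).and
    ((h2.eventually (eventually_gt_nhds (by linarith : 1 - ε' < 1))).and
      (eventually_ge_atTop (1:ℝ)))).exists)
  have hA0 : (0:ℝ) < A := by linarith
  -- uniform continuity on the compact middle part
  have huc := (isCompact_Icc (a := -A) (b := A)).uniformContinuousOn_of_continuous
    hfc.continuousOn
  obtain ⟨δ, hδ0, hδ⟩ := Metric.uniformContinuousOn_iff.1 huc ε' hε'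
  set m : ℕ := ⌈(2 * A) / δ⌉₊ + 1 with hmdef
  have hm0 : (0:ℝ) < m := by positivity
  set step := 2 * A / m with hstepdef
  have hstep0 : 0 < step := by positivity
  have hstep_lt : step < δ := by
    rw [hstepdef, div_lt_iff₀ hm0]
    have : (2 * A) / δ ≤ (⌈(2 * A) / δ⌉₊ : ℝ) := Nat.le_ceil _
    have hmge : (2 * A) / δ + 1 ≤ (m:ℝ) := by
      rw [hmdef]; push_cast; linarith
    nlinarith [div_mul_cancel₀ (2 * A) (ne_of_gt hδ0)]
  set xi : ℕ → ℝ := fun i => -A + i * step with hxidef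
  have hxi_mem : ∀ i : ℕ, i ≤ m → xi i ∈ Icc (-A) A := by
    intro i hi
    constructor
    · rw [hxidef]; simp only []; nlinarith [Nat.cast_nonneg (α := ℝ) i, hstep0.le]
    · have : (i:ℝ) * step ≤ m * step := by
        apply mul_le_mul_of_nonneg_right _ hstep0.le
        exact_mod_cast hi
      have hms : (m:ℝ) * step = 2 * A := by
        rw [hstepdef]; field_simp
      rw [hxidef]; simp only []; linarith
  -- the grid event
  have hgrid : ∀ᶠ k in atTop, ∀ i ∈ Finset.range (m + 1),
      dist (Fk k (xi i)) (f (xi i)) < ε' := by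
    rw [eventually_all_finset]
    intro i _
    obtain ⟨N, hN⟩ := Metric.tendsto_atTop.1 (hpt (xi i)) ε' hε'
    exact eventually_atTop.2 ⟨N, fun k hk => hN k hk⟩
  filter_upwards [hgrid] with k hk
  intro x
  rw [Real.dist_eq, abs_sub_lt_iff]
  rcases le_or_gt x (-A) with hx | hx
  · -- left tail
    have hx0 : x ≤ 0 := by linarith
    have hrp : A ^ d ≤ (-x) ^ d := Real.rpow_le_rpow hA0.le (by linarith) (by linarith)
    have hlb' : Real.exp (-(Real.exp 1 * Real.exp (-(Real.exp (-1) * A ^ d))))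
        ≤ Real.exp (-(Real.exp 1 * Real.exp (-(Real.exp (-1) * (-x) ^ d)))) := by
      apply Real.exp_le_exp.2
      apply neg_le_neg
      apply mul_le_mul_of_nonneg_left _ (Real.exp_pos _).le
      apply Real.exp_le_exp.2
      apply neg_le_neg
      exact mul_le_mul_of_nonneg_left hrp (Real.exp_pos _).le
    have hF1 : 1 - ε' < Fk k x := lt_of_lt_of_le (lt_of_lt_of_le hA2 hlb') (hFlb k x hx0)
    have hf1 : 1 - ε' < f x := lt_of_lt_of_le (lt_of_lt_of_le hA2 hlb') (hflb x hx0)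
    have hFle := (hFmem k x).2
    have hfle := (hfmem x).2
    constructor <;> linarith
  · rcases le_or_gt A x with hx' | hx'
    · -- right tail
      have hF1 : Fk k x < ε' := by
        have := hFub k x (by linarith)
        have hrp : x ^ d ≥ A ^ d := Real.rpow_le_rpow hA0.le hx' (by linarith)
        have hmono : Real.exp (-(Real.exp (-1) * x ^ d)) ≤ Real.exp (-(Real.exp (-1) * A ^ d)) := by
          apply Real.exp_le_exp.2; apply neg_le_neg
          exact mul_le_mul_of_nonneg_left hrp (Real.exp_pos _).le
        linarith
      have hf1 : f x < ε' := by
        have := hfub x (by linarith)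
        have hrp : x ^ d ≥ A ^ d := Real.rpow_le_rpow hA0.le hx' (by linarith)
        have hmono : Real.exp (-(Real.exp (-1) * x ^ d)) ≤ Real.exp (-(Real.exp (-1) * A ^ d)) := by
          apply Real.exp_le_exp.2; apply neg_le_neg
          exact mul_le_mul_of_nonneg_left hrp (Real.exp_pos _).le
        linarith
      have := (hFmem k x).1; have := (hfmem x).1
      constructor <;> linarith
    · -- middle
      set r := (x + A) / step with hrdef
      have hr0 : 0 ≤ r := div_nonneg (by linarith) hstep0.le
      set i := ⌊r⌋₊ with hidef
      have hrm : r < m := by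
        rw [hrdef, div_lt_iff₀ hstep0]
        have : (m:ℝ) * step = 2 * A := by rw [hstepdef]; field_simp
        linarith
      have him : i < m := by
        rw [hidef]; exact_mod_cast (Nat.floor_lt hr0).2 hrm
      have hrs : r * step = x + A := div_mul_cancel₀ _ (ne_of_gt hstep0)
      have hxi_le : xi i ≤ x := by
        have := Nat.floor_le hr0
        have : (i:ℝ) * step ≤ r * step := mul_le_mul_of_nonneg_right this hstep0.le
        rw [hxidef]; simp only []; linarith [hrs ▸ this]
      have hle_xi : x ≤ xi (i + 1) := by
        have := Nat.lt_floor_add_one r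
        have h5 : r * step ≤ ((i:ℝ) + 1) * step := mul_le_mul_of_nonneg_right this.le hstep0.le
        rw [hxidef]; push_cast; nlinarith
      have hxi_i_mem : xi i ∈ Icc (-A) A := hxi_mem i him.le
      have hxi_i1_mem : xi (i + 1) ∈ Icc (-A) A := hxi_mem (i + 1) him
      have hx_mem : x ∈ Icc (-A) A := ⟨hx.le, hx'.le⟩
      have hstep_eq : xi (i + 1) = xi i + step := by
        rw [hxidef]; push_cast; ring
      have hub : x ≤ xi i + step := by rw [← hstep_eq]; exact hle_xi
      have hd1 : dist (f (xi i)) (f x) < ε' := by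
        apply hδ _ hxi_i_mem _ hx_mem
        rw [Real.dist_eq, abs_lt]
        constructor <;> linarith
      have hd2 : dist (f (xi (i + 1))) (f x) < ε' := by
        apply hδ _ hxi_i1_mem _ hx_mem
        rw [Real.dist_eq, abs_lt, hstep_eq]
        constructor <;> linarith
      have hg1 : dist (Fk k (xi i)) (f (xi i)) < ε' :=
        hk i (Finset.mem_range.2 (by omega))
      have hg2 : dist (Fk k (xi (i + 1))) (f (xi (i + 1))) < ε' :=
        hk (i + 1) (Finset.mem_range.2 (by omega))
      rw [Real.dist_eq, abs_lt] at hd1 hd2 hg1 hg2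
      have hm1 : Fk k x ≤ Fk k (xi i) := hFanti k hxi_le
      have hm2 : Fk k (xi (i + 1)) ≤ Fk k x := hFanti k hle_xi
      constructor <;> linarith

lemma flim_pointwise {d : ℝ} {g : ℚ → ℝ} (hd : 1 < d) (lam : ℕ → ℝ)
    (hpos : ∀ n, 0 < lam n) (hlim : Tendsto lam atTop atTop) (F : ℕ → ℝ → ℝ)
    (hF : ∀ n, ExtFixedPoint d (lam n) (F n)) (φ : ℕ → ℕ) (hφ : StrictMono φ)
    (hg : ∀ q : ℚ, Tendsto (fun k => F (φ k) (q : ℝ)) atTop (nhds (g q)))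
    (gmem : ∀ q, g q ∈ Icc (0:ℝ) 1) :
    ∀ x, Tendsto (fun k => F (φ k) x) atTop (nhds (flim d g x)) := by
  have hae : ∀ᵐ t : ℝ, Tendsto (fun k => F (φ k) t) atTop (nhds (hellyLim g t)) := by
    have hcount := (hellyLim_antitone gmem).countable_not_continuousAt
    have hnull : volume {t : ℝ | ¬ContinuousAt (hellyLim g) t} = 0 := hcount.measure_zero _
    have hcontae : ∀ᵐ t : ℝ, ContinuousAt (hellyLim g) t := by
      rw [ae_iff]; simpa using hnull
    filter_upwards [hcontae] with t ht
    exact helly_tendsto (fun k => efp_antitone (hF _) (hpos _)) hg gmem ht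
  intro x
  have h2 := integral_tendsto hd x (fun k => efp_measurable (hF _) (hpos _))
    (fun k t => efp_mem (hF _) (hpos _) t) (fun k t => efp_le_bnd hd (hF _) (hpos _) t)
    (ae_restrict_of_ae hae)
  have h3 := (Real.continuous_exp.tendsto _).comp ((h2.const_mul d).neg)
  apply h3.congr'
  have hlamφ : Tendsto (fun k => lam (φ k)) atTop atTop := hlim.comp hφ.tendsto_atTop
  filter_upwards [hlamφ.eventually (eventually_ge_atTop |x|)] with k hk
  exact (efp_eq hd (hF _) (hpos _)
    ⟨by linarith [neg_abs_le x], by linarith [le_abs_self x]⟩).symm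


/-- relative compactness: every sequence `λ_n → ∞` admits a
subsequence along which the extended fixed points converge uniformly on `ℝ` to a
continuous non-increasing `f : ℝ → [0,1]`, and every such sub-sequential uniform
limit solves the un-truncated cavity equation. -/
theorem truncated_fixedPoints_relatively_compact (d : ℝ) (hd : 1 < d)
    (lam : ℕ → ℝ) (hpos : ∀ n, 0 < lam n) (hlim : Tendsto lam atTop atTop)
    (F : ℕ → ℝ → ℝ) (hF : ∀ n, ExtFixedPoint d (lam n) (F n)) :
    (∃ φ : ℕ → ℕ, StrictMono φ ∧ ∃ f : ℝ → ℝ,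
      Continuous f ∧ Antitone f ∧ (∀ x, f x ∈ Icc (0 : ℝ) 1) ∧
      TendstoUniformly (fun k => F (φ k)) f atTop ∧ SolvesCavity d f) ∧
    (∀ φ : ℕ → ℕ, StrictMono φ → ∀ f : ℝ → ℝ,
      Continuous f → Antitone f → (∀ x, f x ∈ Icc (0 : ℝ) 1) →
      TendstoUniformly (fun k => F (φ k)) f atTop → SolvesCavity d f) := by
  constructor
  · obtain ⟨φ, hφ, g, hg⟩ := extract_subseq lam hpos F hF
    have gmem : ∀ q, g q ∈ Icc (0:ℝ) 1 := fun q => isClosed_Icc.mem_of_tendsto (hg q)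
      (Eventually.of_forall fun k => efp_mem (hF _) (hpos _) _)
    have gub : ∀ q : ℚ, 0 ≤ (q:ℝ) → g q ≤ Real.exp (-(Real.exp (-1) * (q:ℝ) ^ d)) :=
      fun q hq => le_of_tendsto (hg q)
        (Eventually.of_forall fun k => efp_upper hd (hF _) (hpos _) hq)
    have hpt := flim_pointwise hd lam hpos hlim F hF φ hφ hg gmem
    set f := flim d g with hfdef
    have hfc : Continuous f := flim_continuous hd gmem gub
    have hfmem : ∀ x, f x ∈ Icc (0:ℝ) 1 := fun x => isClosed_Icc.mem_of_tendsto (hpt x)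
      (Eventually.of_forall fun k => efp_mem (hF _) (hpos _) x)
    have hfanti : Antitone f := fun x y hxy => le_of_tendsto_of_tendsto' (hpt y) (hpt x)
      (fun k => efp_antitone (hF _) (hpos _) hxy)
    have hfub : ∀ t, 0 ≤ t → f t ≤ Real.exp (-(Real.exp (-1) * t ^ d)) :=
      fun t ht => le_of_tendsto (hpt t)
        (Eventually.of_forall fun k => efp_upper hd (hF _) (hpos _) ht)
    have hflb : ∀ x, x ≤ 0 →
        Real.exp (-(Real.exp 1 * Real.exp (-(Real.exp (-1) * (-x) ^ d)))) ≤ f x :=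
      fun x hx => ge_of_tendsto (hpt x)
        (Eventually.of_forall fun k => efp_lower hd (hF _) (hpos _) hx)
    have hunif : TendstoUniformly (fun k => F (φ k)) f atTop :=
      polya hd _ f hfc (fun k => efp_antitone (hF _) (hpos _))
        (fun k t => efp_mem (hF _) (hpos _) t)
        (fun k t ht => efp_upper hd (hF _) (hpos _) ht)
        (fun k x hx => efp_lower hd (hF _) (hpos _) hx)
        hfub hflb hfmem hpt
    exact ⟨φ, hφ, f, hfc, hfanti, hfmem, hunif,
      part2 hd lam hpos hlim F hF φ hφ f hfc hfmem hunif⟩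
  · intro φ hφ f h1 _ h3 h4
    exact part2 hd lam hpos hlim F hF φ hφ f h1 h3 h4
end

section
/- Fix d > 1. Any measurable solution f : ℝ → [0,1] of the un-truncated cavity equation satisfies, for all x ≥ 0, max(f(x), 1 - f(-x)) ≤ exp(-x^d / e). Moreover, f takes values in the open interval (0,1) and is continuous on ℝ. -/
open MeasureTheory Set Filter
open Topology ENNReal

lemma rpow_superadd {d : ℝ} (hd : 1 ≤ d) {a b : ℝ} (ha : 0 ≤ a) (hb : 0 ≤ b) :
    a ^ d + b ^ d ≤ (a + b) ^ d := by
  have h := NNReal.add_rpow_le_rpow_add (a.toNNReal) (b.toNNReal) hd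
  have h2 := NNReal.coe_le_coe.2 h
  push_cast at h2
  rwa [Real.coe_toNNReal a ha, Real.coe_toNNReal b hb] at h2

lemma key_integral {d c : ℝ} (hd : 1 < d) (hc : 0 < c) (a : ℝ) :
    (∫ y in Ioi a, (y - a) ^ (d - 1) * Real.exp (-(c * (y - a) ^ d))) = 1 / (c * d) ∧
    IntegrableOn (fun y => (y - a) ^ (d - 1) * Real.exp (-(c * (y - a) ^ d))) (Ioi a) := by
  have hd0 : (0:ℝ) < d := lt_trans zero_lt_one hd
  set F : ℝ → ℝ := fun y => -(1/(c*d)) * Real.exp (-(c * (y - a) ^ d)) with hF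
  have hderiv : ∀ y ∈ Ici a, HasDerivAt F ((y - a) ^ (d - 1) * Real.exp (-(c * (y - a) ^ d))) y := by
    intro y _
    have h1 : HasDerivAt (fun y : ℝ => y - a) 1 y := (hasDerivAt_id y).sub_const a
    have h2 : HasDerivAt (fun y : ℝ => (y - a) ^ d) (d * (y - a) ^ (d - 1) * 1) y :=
      (Real.hasDerivAt_rpow_const (Or.inr hd.le)).comp y h1
    have h4 : HasDerivAt (fun y : ℝ => Real.exp (-(c * (y - a) ^ d)))
        (Real.exp (-(c * (y - a) ^ d)) * (-(c * (d * (y - a) ^ (d-1) * 1)))) y :=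
      ((h2.const_mul c).neg).exp
    have h5 := h4.const_mul (-(1/(c*d)))
    refine HasDerivAt.congr_deriv h5 ?_
    rw [show -(1/(c*d)) * (Real.exp (-(c * (y - a) ^ d)) * -(c * (d * (y - a) ^ (d-1) * 1))) = (c*d)/(c*d) * ((y - a) ^ (d - 1) * Real.exp (-(c * (y - a) ^ d))) by ring, div_self (by positivity), one_mul]
  have g'pos : ∀ y ∈ Ioi a, 0 ≤ (y - a) ^ (d - 1) * Real.exp (-(c * (y - a) ^ d)) := by
    intro y hy
    have : (0:ℝ) ≤ y - a := by have := mem_Ioi.1 hy; linarith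
    positivity
  have hT : Tendsto F atTop (𝓝 0) := by
    have t1 : Tendsto (fun y : ℝ => y - a) atTop atTop := tendsto_atTop_add_const_right _ (-a) tendsto_id
    have t2 : Tendsto (fun y : ℝ => (y - a) ^ d) atTop atTop :=
      (tendsto_rpow_atTop hd0).comp t1
    have t3 : Tendsto (fun y : ℝ => -(c * (y - a) ^ d)) atTop atBot :=
      tendsto_neg_atTop_atBot.comp (t2.const_mul_atTop hc)
    have t4 : Tendsto (fun y : ℝ => Real.exp (-(c * (y - a) ^ d))) atTop (𝓝 0) :=
      Real.tendsto_exp_atBot.comp t3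
    have t5 := t4.const_mul (-(1/(c*d)))
    rw [mul_zero] at t5
    exact t5
  have hint := integral_Ioi_of_hasDerivAt_of_nonneg' hderiv g'pos hT
  have hintg := integrableOn_Ioi_deriv_of_nonneg' hderiv g'pos hT
  refine ⟨?_, hintg⟩
  rw [hint, hF]
  simp only [sub_self, Real.zero_rpow (ne_of_gt hd0), mul_zero, neg_zero, Real.exp_zero, mul_one]
  ring

/-- uniform bounds, `(0,1)`-valuedness and continuity for any
solution of the un-truncated cavity equation. -/
theorem cavity_solution_bounds (d : ℝ) (hd : 1 < d)
    (f : ℝ → ℝ) (hf : SolvesCavity d f) :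
    (∀ x : ℝ, 0 ≤ x →
      max (f x) (1 - f (-x)) ≤ Real.exp (-(x ^ d / Real.exp 1))) ∧
    (∀ x : ℝ, f x ∈ Ioo (0 : ℝ) 1) ∧ Continuous f := by
  obtain ⟨hmeas, hmem, hint, heq⟩ := hf
  have hd0 : (0:ℝ) < d := lt_trans zero_lt_one hd
  have hd1 : (0:ℝ) ≤ d - 1 := by linarith
  set g : ℝ → ℝ := fun x => ∫ y in Ioi (-x), (x + y) ^ (d - 1) * f y with hgdef
  have hnn : ∀ x : ℝ, ∀ y ∈ Ioi (-x), 0 ≤ (x + y) ^ (d - 1) * f y := by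
    intro x y hy
    have hy' : -x < y := mem_Ioi.1 hy
    have : (0:ℝ) ≤ x + y := by linarith
    exact mul_nonneg (Real.rpow_nonneg this _) (hmem y).1
  have hfpos : ∀ x, 0 < f x := fun x => (heq x) ▸ Real.exp_pos _
  have hg_nonneg : ∀ x, 0 ≤ g x := fun x => setIntegral_nonneg measurableSet_Ioi (hnn x)
  -- ae nonneg on restrict
  have hnn_ae : ∀ x : ℝ, 0 ≤ᵐ[volume.restrict (Ioi (-x))]
      (fun y => (x + y) ^ (d - 1) * f y) := by
    intro x
    exact (ae_restrict_iff' measurableSet_Ioi).2 (ae_of_all _ (hnn x))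
  have hg_mono : Monotone g := by
    intro x1 x2 h12
    have hsub : Ioi (-x1) ⊆ Ioi (-x2) := Ioi_subset_Ioi (neg_le_neg h12)
    calc g x1 ≤ ∫ y in Ioi (-x1), (x2 + y) ^ (d - 1) * f y := by
          refine setIntegral_mono_on (hint x1) ((hint x2).mono_set hsub) measurableSet_Ioi ?_
          intro y hy
          have hy' : -x1 < y := mem_Ioi.1 hy
          exact mul_le_mul_of_nonneg_right
            (Real.rpow_le_rpow (by linarith) (by linarith) hd1) (hmem y).1
      _ ≤ g x2 := setIntegral_mono_set (hint x2) (hnn_ae x2) (HasSubset.Subset.eventuallyLE hsub)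
  have hfanti : Antitone f := by
    intro x1 x2 h
    rw [heq x1, heq x2]
    exact Real.exp_le_exp.2 (neg_le_neg (mul_le_mul_of_nonneg_left (hg_mono h) hd0.le))
  -- ★: f x ≤ f 0 * exp(-(f 0 * x^d)) for x ≥ 0
  have hc0 : 0 < f 0 := hfpos 0
  have hc1 : f 0 ≤ 1 := (hmem 0).2
  have hrpow_cont : ∀ x : ℝ, Continuous fun y : ℝ => (x + y) ^ (d - 1) := by
    intro x
    refine continuous_iff_continuousAt.2 fun y => ?_
    exact (Real.continuousAt_rpow_const _ _ (Or.inr hd1)).comp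
      ((continuous_const.add continuous_id).continuousAt)
  have hIoc_int : ∀ x : ℝ, IntegrableOn (fun y : ℝ => (x + y) ^ (d - 1) * f 0) (Ioc (-x) 0) := by
    intro x
    exact ((hrpow_cont x).mul continuous_const).integrableOn_Ioc
  have hIoc_val : ∀ x : ℝ, 0 ≤ x →
      (∫ y in Ioc (-x) 0, (x + y) ^ (d - 1) * f 0) = x ^ d / d * f 0 := by
    intro x hx
    have hle : -x ≤ (0:ℝ) := by linarith
    rw [← intervalIntegral.integral_of_le hle]
    rw [intervalIntegral.integral_mul_const]
    have h1 : (∫ y in (-x)..(0:ℝ), (x + y) ^ (d - 1)) = ∫ u in (x + -x)..(x + 0), u ^ (d - 1) :=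
      intervalIntegral.integral_comp_add_left (fun u => u ^ (d - 1)) x
    rw [h1]
    simp only [add_neg_cancel, add_zero]
    rw [integral_rpow (Or.inl (by linarith))]
    rw [sub_add_cancel, Real.zero_rpow (by positivity)]
    ring_nf
  have hgsplit : ∀ x : ℝ, 0 ≤ x →
      g x = (∫ y in Ioc (-x) 0, (x + y) ^ (d - 1) * f y) +
            (∫ y in Ioi 0, (x + y) ^ (d - 1) * f y) := by
    intro x hx
    have hle : -x ≤ (0:ℝ) := by linarith
    rw [hgdef]
    simp only
    rw [← Ioc_union_Ioi_eq_Ioi hle]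
    rw [setIntegral_union (Ioc_disjoint_Ioi le_rfl) measurableSet_Ioi
      ((hint x).mono_set (by rw [← Ioc_union_Ioi_eq_Ioi hle]; exact subset_union_left))
      ((hint x).mono_set (by rw [← Ioc_union_Ioi_eq_Ioi hle]; exact subset_union_right))]
  have hg0eq : g 0 = ∫ y in Ioi (0:ℝ), (0 + y) ^ (d - 1) * f y := by
    rw [hgdef]; simp only [neg_zero]
  have hglb : ∀ x : ℝ, 0 ≤ x → f 0 * (x ^ d / d) + g 0 ≤ g x := by
    intro x hx
    rw [hgsplit x hx]
    have t1 : f 0 * (x ^ d / d) ≤ ∫ y in Ioc (-x) 0, (x + y) ^ (d - 1) * f y := by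
      have := setIntegral_mono_on (hIoc_int x)
        ((hint x).mono_set Ioc_subset_Ioi_self) measurableSet_Ioc (fun y hy => ?_)
      · calc f 0 * (x ^ d / d) = x ^ d / d * f 0 := by ring
          _ = ∫ y in Ioc (-x) 0, (x + y) ^ (d - 1) * f 0 := (hIoc_val x hx).symm
          _ ≤ _ := this
      · have hy2 : y ≤ 0 := hy.2
        have hy1 : -x < y := hy.1
        exact mul_le_mul_of_nonneg_left (hfanti hy2) (Real.rpow_nonneg (by linarith) _)
    have t2 : g 0 ≤ ∫ y in Ioi 0, (x + y) ^ (d - 1) * f y := by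
      rw [hg0eq]
      refine setIntegral_mono_on ?_
        ((hint x).mono_set (Ioi_subset_Ioi (by linarith))) measurableSet_Ioi ?_
      · have := hint 0; rwa [neg_zero] at this
      · intro y hy
        have hy' : (0:ℝ) < y := mem_Ioi.1 hy
        exact mul_le_mul_of_nonneg_right
          (Real.rpow_le_rpow (by linarith) (by linarith) hd1) (hmem y).1
    linarith
  have hstar : ∀ x : ℝ, 0 ≤ x → f x ≤ f 0 * Real.exp (-(f 0 * x ^ d)) := by
    intro x hx
    rw [heq x]
    have h1 : -(d * g x) ≤ -(f 0 * x ^ d) + -(d * g 0) := by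
      have := mul_le_mul_of_nonneg_left (hglb x hx) hd0.le
      have hexp : d * (f 0 * (x ^ d / d)) = f 0 * x ^ d := by field_simp
      nlinarith [this]
    calc Real.exp (-(d * g x)) ≤ Real.exp (-(f 0 * x ^ d) + -(d * g 0)) := Real.exp_le_exp.2 h1
      _ = f 0 * Real.exp (-(f 0 * x ^ d)) := by rw [Real.exp_add, ← heq 0]; ring
  -- g 0 ≤ 1/d
  obtain ⟨hkey0, hkey0int⟩ := key_integral hd hc0 0
  simp only [sub_zero] at hkey0 hkey0int
  have hg0le : g 0 ≤ 1 / d := by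
    have hmono : g 0 ≤ ∫ y in Ioi (0:ℝ), f 0 * (y ^ (d - 1) * Real.exp (-(f 0 * y ^ d))) := by
      rw [hg0eq]
      refine setIntegral_mono_on ?_ (hkey0int.const_mul (f 0)) measurableSet_Ioi ?_
      · have := hint 0; rwa [neg_zero] at this
      · intro y hy
        have hy' : (0:ℝ) < y := mem_Ioi.1 hy
        rw [zero_add]
        calc y ^ (d-1) * f y ≤ y ^ (d-1) * (f 0 * Real.exp (-(f 0 * y ^ d))) :=
              mul_le_mul_of_nonneg_left (hstar y hy'.le) (Real.rpow_nonneg hy'.le _)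
          _ = f 0 * (y ^ (d-1) * Real.exp (-(f 0 * y ^ d))) := by ring
    rw [integral_const_mul, hkey0] at hmono
    calc g 0 ≤ f 0 * (1 / (f 0 * d)) := hmono
      _ = 1 / d := by field_simp
  have hce : Real.exp (-1) ≤ f 0 := by
    rw [heq 0]
    refine Real.exp_le_exp.2 ?_
    have : d * g 0 ≤ d * (1/d) := mul_le_mul_of_nonneg_left hg0le hd0.le
    rw [mul_one_div, div_self (ne_of_gt hd0)] at this
    linarith
  -- bound 1 : f x ≤ exp(-(x^d / e))
  have hbound1 : ∀ x : ℝ, 0 ≤ x → f x ≤ Real.exp (-(x ^ d / Real.exp 1)) := by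
    intro x hx
    have hxd : (0:ℝ) ≤ x ^ d := Real.rpow_nonneg hx _
    have h1 : x ^ d / Real.exp 1 ≤ f 0 * x ^ d := by
      rw [div_eq_mul_inv, ← Real.exp_neg]
      calc x ^ d * Real.exp (-1) ≤ x ^ d * f 0 := mul_le_mul_of_nonneg_left hce hxd
        _ = f 0 * x ^ d := by ring
    calc f x ≤ f 0 * Real.exp (-(f 0 * x ^ d)) := hstar x hx
      _ ≤ 1 * Real.exp (-(x ^ d / Real.exp 1)) := by
          refine mul_le_mul hc1 (Real.exp_le_exp.2 (by linarith)) (Real.exp_pos _).le zero_le_one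
      _ = Real.exp (-(x ^ d / Real.exp 1)) := one_mul _
  -- bound 2 : 1 - f (-x) ≤ exp(-(x^d / e))
  have hbound2 : ∀ x : ℝ, 0 ≤ x → 1 - f (-x) ≤ Real.exp (-(x ^ d / Real.exp 1)) := by
    intro x hx
    have hxd : (0:ℝ) ≤ x ^ d := Real.rpow_nonneg hx _
    obtain ⟨hkeyx, hkeyxint⟩ := key_integral hd hc0 x
    have hup : 1 - f (-x) ≤ d * g (-x) := by
      have h1 : -(d * g (-x)) + 1 ≤ Real.exp (-(d * g (-x))) := Real.add_one_le_exp _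
      rw [← heq (-x)] at h1
      linarith
    have hgx : g (-x) ≤ (f 0 * Real.exp (-(f 0 * x ^ d))) * (1 / (f 0 * d)) := by
      have hIoieq : Ioi (-(-x)) = Ioi x := by rw [neg_neg]
      have hintx : IntegrableOn (fun y => (-x + y) ^ (d - 1) * f y) (Ioi x) := by
        have := hint (-x); rwa [hIoieq] at this
      have hgxeq : g (-x) = ∫ y in Ioi x, (-x + y) ^ (d - 1) * f y := by
        rw [hgdef]; simp only [neg_neg]
      rw [hgxeq]
      have hmono2 : (∫ y in Ioi x, (-x + y) ^ (d - 1) * f y) ≤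
          ∫ y in Ioi x, (f 0 * Real.exp (-(f 0 * x ^ d))) *
            ((y - x) ^ (d - 1) * Real.exp (-(f 0 * (y - x) ^ d))) := by
        refine setIntegral_mono_on hintx
          (hkeyxint.const_mul _) measurableSet_Ioi ?_
        intro y hy
        have hy' : x < y := mem_Ioi.1 hy
        have hy0 : (0:ℝ) ≤ y := le_trans hx hy'.le
        have hsup : x ^ d + (y - x) ^ d ≤ y ^ d := by
          have := rpow_superadd hd.le hx (by linarith : (0:ℝ) ≤ y - x)
          rwa [add_sub_cancel] at this
        have hexp : Real.exp (-(f 0 * y ^ d)) ≤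
            Real.exp (-(f 0 * x ^ d)) * Real.exp (-(f 0 * (y - x) ^ d)) := by
          rw [← Real.exp_add]
          refine Real.exp_le_exp.2 ?_
          nlinarith [hc0.le, hsup]
        have hfy : f y ≤ f 0 * (Real.exp (-(f 0 * x ^ d)) * Real.exp (-(f 0 * (y - x) ^ d))) := by
          calc f y ≤ f 0 * Real.exp (-(f 0 * y ^ d)) := hstar y hy0
            _ ≤ _ := mul_le_mul_of_nonneg_left hexp hc0.le
        have hbase : (-x + y) = y - x := by ring
        rw [hbase]
        calc (y - x) ^ (d-1) * f y
            ≤ (y - x) ^ (d-1) * (f 0 * (Real.exp (-(f 0 * x ^ d)) * Real.exp (-(f 0 * (y - x) ^ d)))) :=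
              mul_le_mul_of_nonneg_left hfy (Real.rpow_nonneg (by linarith) _)
          _ = (f 0 * Real.exp (-(f 0 * x ^ d))) * ((y - x) ^ (d - 1) * Real.exp (-(f 0 * (y - x) ^ d))) := by ring
      rw [integral_const_mul, hkeyx] at hmono2
      exact hmono2
    have : d * g (-x) ≤ Real.exp (-(f 0 * x ^ d)) := by
      have := mul_le_mul_of_nonneg_left hgx hd0.le
      calc d * g (-x) ≤ d * ((f 0 * Real.exp (-(f 0 * x ^ d))) * (1 / (f 0 * d))) := this
        _ = Real.exp (-(f 0 * x ^ d)) := by field_simp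
    have hfin : Real.exp (-(f 0 * x ^ d)) ≤ Real.exp (-(x ^ d / Real.exp 1)) := by
      refine Real.exp_le_exp.2 ?_
      have h1 : x ^ d / Real.exp 1 ≤ f 0 * x ^ d := by
        rw [div_eq_mul_inv, ← Real.exp_neg]
        calc x ^ d * Real.exp (-1) ≤ x ^ d * f 0 := mul_le_mul_of_nonneg_left hce hxd
          _ = f 0 * x ^ d := by ring
      linarith
    linarith
  -- (0,1)-valuedness
  have hIoo : ∀ x : ℝ, f x ∈ Ioo (0:ℝ) 1 := by
    intro x
    refine ⟨hfpos x, ?_⟩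
    have hgpos : 0 < g x := by
      rw [hgdef]
      refine (setIntegral_pos_iff_support_of_nonneg_ae (hnn_ae x) (hint x)).2 ?_
      have hsupp : Ioi (-x) ⊆ Function.support (fun y => (x + y) ^ (d - 1) * f y) := by
        intro y hy
        have hy' : -x < y := mem_Ioi.1 hy
        have : 0 < (x + y) ^ (d - 1) * f y :=
          mul_pos (Real.rpow_pos_of_pos (by linarith) _) (hfpos y)
        exact ne_of_gt this
      calc (0:ℝ≥0∞) < volume (Ioi (-x)) := by rw [Real.volume_Ioi]; exact ENNReal.zero_lt_top
        _ ≤ volume (Function.support (fun y => (x + y) ^ (d - 1) * f y) ∩ Ioi (-x)) :=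
          measure_mono (subset_inter hsupp Subset.rfl)
    rw [heq x]
    rw [Real.exp_lt_one_iff]
    nlinarith
  -- continuity
  have hFmeas : ∀ x : ℝ, Measurable fun y => (x + y) ^ (d - 1) * f y :=
    fun x => ((hrpow_cont x).measurable).mul hmeas
  have hgcont : Continuous g := by
    refine continuous_iff_continuousAt.2 fun x0 => ?_
    set F : ℝ → ℝ → ℝ := fun x => (Ioi (-x)).indicator (fun y => (x + y) ^ (d - 1) * f y) with hFdef
    have hGeq : ∀ x : ℝ, g x = ∫ y, F x y := by
      intro x
      rw [hgdef]
      exact (integral_indicator measurableSet_Ioi).symm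
    set bound : ℝ → ℝ := (Ioi (-(x0+1))).indicator (fun y => ((x0+1) + y) ^ (d - 1) * f y)
      with hbdef
    have hbound_nonneg : ∀ y, 0 ≤ bound y := by
      intro y
      rw [hbdef]
      by_cases hy : y ∈ Ioi (-(x0+1))
      · rw [indicator_of_mem hy]; exact hnn _ y hy
      · rw [indicator_of_notMem hy]
    have htend : Tendsto (fun x => ∫ y, F x y) (𝓝 x0) (𝓝 (∫ y, F x0 y)) := by
      refine tendsto_integral_filter_of_dominated_convergence bound ?_ ?_ ?_ ?_
      · exact Eventually.of_forall fun x =>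
          ((hFmeas x).indicator measurableSet_Ioi).aestronglyMeasurable
      · filter_upwards [Iio_mem_nhds (show x0 < x0 + 1 by linarith)] with x hx
        refine ae_of_all _ fun y => ?_
        have hxle : x ≤ x0 + 1 := (mem_Iio.1 hx).le
        by_cases hy : y ∈ Ioi (-x)
        · rw [hFdef]
          simp only
          rw [indicator_of_mem hy]
          have hy' : -x < y := mem_Ioi.1 hy
          have hy2 : y ∈ Ioi (-(x0+1)) := mem_Ioi.2 (by linarith)
          rw [Real.norm_of_nonneg (hnn x y hy), hbdef, indicator_of_mem hy2]
          exact mul_le_mul_of_nonneg_right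
            (Real.rpow_le_rpow (by linarith) (by linarith) hd1) (hmem y).1
        · rw [hFdef]
          simp only
          rw [indicator_of_notMem hy, norm_zero]
          exact hbound_nonneg y
      · rw [hbdef]
        exact (integrable_indicator_iff measurableSet_Ioi).2 (hint (x0+1))
      · have hae : ∀ᵐ (y:ℝ), y ≠ -x0 := by
          rw [ae_iff]
          have : {y : ℝ | ¬ y ≠ -x0} = {-x0} := by ext y; simp
          rw [this]
          exact measure_singleton _
        filter_upwards [hae] with y hy
        rcases lt_or_gt_of_ne hy with h | h
        · have h0 : F x0 y = 0 := indicator_of_notMem (by simp only [mem_Ioi]; push_neg; linarith) _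
          rw [h0]
          have hev : ∀ᶠ x in 𝓝 x0, F x y = 0 := by
            filter_upwards [Iio_mem_nhds (show x0 < -y by linarith)] with x hx
            exact indicator_of_notMem (by simp only [mem_Ioi]; push_neg; linarith [mem_Iio.1 hx]) _
          exact Tendsto.congr' (hev.mono fun x hx => hx.symm) tendsto_const_nhds
        · have h0 : F x0 y = (x0 + y) ^ (d - 1) * f y := indicator_of_mem (mem_Ioi.2 h) _
          rw [h0]
          have hev : ∀ᶠ x in 𝓝 x0, F x y = (x + y) ^ (d - 1) * f y := by
            filter_upwards [Ioi_mem_nhds (show -y < x0 by linarith)] with x hx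
            exact indicator_of_mem (mem_Ioi.2 (by linarith [mem_Ioi.1 hx])) _
          have hca : ContinuousAt (fun x : ℝ => (x + y) ^ (d - 1) * f y) x0 :=
            ((Real.continuousAt_rpow_const _ _ (Or.inr hd1)).comp
              ((continuous_id.add continuous_const).continuousAt)).mul continuousAt_const
          exact Tendsto.congr' (hev.mono fun x hx => hx.symm) hca
    have : ContinuousAt (fun x => ∫ y, F x y) x0 := htend
    rw [ContinuousAt]
    rw [show g x0 = ∫ y, F x0 y from hGeq x0]
    exact Tendsto.congr (fun x => (hGeq x).symm) htend
  have hfcont : Continuous f := by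
    have : f = fun x => Real.exp (-(d * g x)) := funext fun x => heq x
    rw [this]
    exact Real.continuous_exp.comp ((continuous_const.mul hgcont).neg)
  exact ⟨fun x hx => max_le (hbound1 x hx) (hbound2 x hx), hIoo, hfcont⟩
end

section
/- Fix d > 1, and let f, g : ℝ → [0,1] be measurable non-increasing solutions of the un-truncated cavity equation. Then the function Δ(t) := ∫_ℝ (f(y - t) - g(y)) dy is well-defined (the integrand is integrable for every t ∈ ℝ), continuous, non-decreasing in t, and tends to -∞ as t → -∞ and to +∞ as t → +∞. -/
open MeasureTheory Set Filter

/- ## Auxiliary lemmas -/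

lemma cavity_pos {d : ℝ} {f : ℝ → ℝ} (hf : SolvesCavity d f) (x : ℝ) : 0 < f x := by
  rw [hf.2.2.2 x]; exact Real.exp_pos _

/-- Lower bound on the cavity integral for positive `x`. -/
lemma cavity_int_lb {d : ℝ} (hd : 1 < d) {f : ℝ → ℝ} (hf : SolvesCavity d f)
    (hanti : Antitone f) {x : ℝ} (hx : 0 < x) :
    f 0 * x ^ d ≤ d * ∫ y in Ioi (-x), (x + y) ^ (d - 1) * f y := by
  set a := f 0 with ha
  have ha0 : 0 < a := cavity_pos hf 0
  have hd0 : (0:ℝ) < d := by linarith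
  -- integrability of the pure power on `Ioc (-x) 0`
  have hii : IntervalIntegrable (fun y => (x + y) ^ (d - 1)) volume (-x) 0 := by
    have h0 : IntervalIntegrable (fun u : ℝ => u ^ (d - 1)) volume 0 x :=
      intervalIntegral.intervalIntegrable_rpow' (by linarith)
    simpa using h0.comp_add_left x
  have hIoc : IntegrableOn (fun y => (x + y) ^ (d - 1)) (Ioc (-x) 0) := by
    rw [← intervalIntegrable_iff_integrableOn_Ioc_of_le (by linarith)]
    exact hii
  have hIoc2 : IntegrableOn (fun y => (x + y) ^ (d - 1) * f y) (Ioc (-x) 0) :=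
    (hf.2.2.1 x).mono_set Ioc_subset_Ioi_self
  -- the pure power integral
  have hval : ∫ y in Ioc (-x) 0, (x + y) ^ (d - 1) = x ^ d / d := by
    rw [← intervalIntegral.integral_of_le (by linarith : -x ≤ (0:ℝ))]
    rw [intervalIntegral.integral_comp_add_left (fun u => u ^ (d - 1)) x]
    simp only [add_neg_cancel, add_zero]
    rw [integral_rpow (Or.inl (by linarith))]
    rw [Real.zero_rpow (by linarith : d - 1 + 1 ≠ 0)]
    ring_nf
  -- step 1 : pointwise lower bound on Ioc
  have step1 : ∫ y in Ioc (-x) 0, (x + y) ^ (d - 1) * a ≤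
      ∫ y in Ioc (-x) 0, (x + y) ^ (d - 1) * f y := by
    refine setIntegral_mono_on (hIoc.mul_const a) hIoc2 measurableSet_Ioc ?_
    intro y hy
    have h1 : 0 ≤ (x + y) ^ (d - 1) := Real.rpow_nonneg (by linarith [hy.1]) _
    have h2 : a ≤ f y := hanti hy.2
    exact mul_le_mul_of_nonneg_left h2 h1
  -- step 2 : monotonicity in set
  have step2 : ∫ y in Ioc (-x) 0, (x + y) ^ (d - 1) * f y ≤
      ∫ y in Ioi (-x), (x + y) ^ (d - 1) * f y := by
    refine setIntegral_mono_set (hf.2.2.1 x) ?_ (HasSubset.Subset.eventuallyLE Ioc_subset_Ioi_self)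
    filter_upwards [ae_restrict_mem measurableSet_Ioi] with y hy
    have h1 : 0 ≤ (x + y) ^ (d - 1) := Real.rpow_nonneg (by simp at hy; linarith) _
    exact mul_nonneg h1 (hf.2.1 y).1
  have hcalc : ∫ y in Ioc (-x) 0, (x + y) ^ (d - 1) * a = a * (x ^ d / d) := by
    rw [integral_mul_const a (fun y => (x + y) ^ (d - 1)), hval]; ring
  have hfin : a * (x ^ d / d) ≤ ∫ y in Ioi (-x), (x + y) ^ (d - 1) * f y := by
    rw [← hcalc]; exact step1.trans step2
  have hdd : d * (a * (x ^ d / d)) = a * x ^ d := by field_simp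
  nlinarith [mul_le_mul_of_nonneg_left hfin (le_of_lt hd0)]

/-- Exponential decay of solutions on `[0, ∞)`. -/
lemma cavity_decay {d : ℝ} (hd : 1 < d) {f : ℝ → ℝ} (hf : SolvesCavity d f)
    (hanti : Antitone f) {x : ℝ} (hx : 0 ≤ x) :
    f x ≤ Real.exp (f 0) * Real.exp (-(f 0 * x)) := by
  set a := f 0 with ha
  have ha0 : 0 < a := cavity_pos hf 0
  rcases le_or_gt x 1 with hx1 | hx1
  · have h1 : f x ≤ 1 := (hf.2.1 x).2
    have h2 : (1:ℝ) ≤ Real.exp a * Real.exp (-(a * x)) := by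
      rw [← Real.exp_add]
      have : (0:ℝ) ≤ a + -(a * x) := by nlinarith
      calc (1:ℝ) = Real.exp 0 := by simp
        _ ≤ _ := Real.exp_le_exp.2 this
    linarith
  · have hx0 : 0 < x := by linarith
    have key := cavity_int_lb hd hf hanti hx0
    have hxd : x ≤ x ^ d := by
      calc x = x ^ (1:ℝ) := by rw [Real.rpow_one]
        _ ≤ x ^ d := Real.rpow_le_rpow_of_exponent_le (by linarith) (by linarith)
    have h3 : a * x ≤ d * ∫ y in Ioi (-x), (x + y) ^ (d - 1) * f y := by
      nlinarith
    have h4 : f x ≤ Real.exp (-(a * x)) := by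
      rw [hf.2.2.2 x]
      exact Real.exp_le_exp.2 (by linarith)
    have h5 : Real.exp (-(a * x)) ≤ Real.exp a * Real.exp (-(a * x)) := by
      nlinarith [Real.exp_pos (-(a * x)), Real.one_le_exp (le_of_lt ha0)]
    linarith

/-- Translation of integrals over `Ioi`. -/
lemma shift_Ioi {G : ℝ → ℝ} (hG : IntegrableOn G (Ioi (0:ℝ))) (x : ℝ) :
    IntegrableOn (fun y => G (x + y)) (Ioi (-x)) ∧
    ∫ y in Ioi (-x), G (x + y) = ∫ u in Ioi (0:ℝ), G u := by
  have key : ∀ y, (Ioi (-x)).indicator (fun y => G (x + y)) y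
      = (Ioi (0:ℝ)).indicator G (x + y) := by
    intro y
    by_cases h : -x < y
    · rw [indicator_of_mem (mem_Ioi.2 h), indicator_of_mem (mem_Ioi.2 (by linarith))]
    · rw [indicator_of_notMem (by simpa [mem_Ioi] using h),
        indicator_of_notMem (by simp only [mem_Ioi]; intro hc; exact h (by linarith))]
  have h1 : Integrable ((Ioi (0:ℝ)).indicator G) :=
    (integrable_indicator_iff measurableSet_Ioi).2 hG
  have h2 : Integrable (fun y => (Ioi (0:ℝ)).indicator G (x + y)) := by
    simpa [add_comm] using h1.comp_add_right x
  constructor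
  · rw [← integrable_indicator_iff measurableSet_Ioi]
    exact h2.congr (Filter.Eventually.of_forall fun y => (key y).symm)
  · rw [← integral_indicator measurableSet_Ioi, ← integral_indicator measurableSet_Ioi]
    calc ∫ y, (Ioi (-x)).indicator (fun y => G (x + y)) y
        = ∫ y, (Ioi (0:ℝ)).indicator G (x + y) := by
          exact integral_congr_ae (Filter.Eventually.of_forall key)
      _ = ∫ u, (Ioi (0:ℝ)).indicator G u := integral_add_left_eq_self _ x

/-- `f - 𝟙_{Iic 0}` is integrable for a non-increasing solution of the cavity equation. -/
lemma cavity_centered_integrable {d : ℝ} (hd : 1 < d) {f : ℝ → ℝ} (hf : SolvesCavity d f)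
    (hanti : Antitone f) :
    Integrable (fun y => f y - (Iic (0:ℝ)).indicator 1 y) := by
  set a := f 0 with ha
  have ha0 : 0 < a := cavity_pos hf 0
  set G : ℝ → ℝ := fun u => u ^ (d - 1) * Real.exp (-(a * u)) with hG
  have hGint : IntegrableOn G (Ioi (0:ℝ)) := by
    have := integrableOn_rpow_mul_exp_neg_mul_rpow (by linarith : (-1:ℝ) < d - 1) zero_lt_one ha0
    simpa [hG, neg_mul] using this
  set K : ℝ := ∫ u in Ioi (0:ℝ), G u with hK
  -- Part 1: integrable on Ioi 0 (there the function is f)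
  have hfIoi : IntegrableOn f (Ioi (0:ℝ)) := by
    have hmaj : IntegrableOn (fun x : ℝ => Real.exp a * Real.exp (-(a * x))) (Ioi (0:ℝ)) := by
      have := (exp_neg_integrableOn_Ioi 0 ha0).const_mul (Real.exp a)
      simp only [neg_mul] at this; exact this
    refine Integrable.mono' hmaj (hf.1.aestronglyMeasurable.restrict) ?_
    filter_upwards [ae_restrict_mem measurableSet_Ioi] with x hx
    rw [Real.norm_eq_abs, abs_of_nonneg (hf.2.1 x).1]
    exact cavity_decay hd hf hanti (le_of_lt hx)
  -- Part 2: `1 - f` integrable on Iic 0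
  have honesub : IntegrableOn (fun x => 1 - f x) (Iic (0:ℝ)) := by
    -- majorant : d * exp a * K * exp (a * x)
    have hbound : ∀ x : ℝ, x ≤ 0 → 1 - f x ≤ d * (Real.exp a * K) * Real.exp (a * x) := by
      intro x hx
      have hshift := shift_Ioi hGint x
      -- pointwise bound inside the integral
      have hmono : ∫ y in Ioi (-x), (x + y) ^ (d - 1) * f y ≤
          ∫ y in Ioi (-x), (Real.exp a * Real.exp (a * x)) * G (x + y) := by
        refine setIntegral_mono_on (hf.2.2.1 x)
          ((hshift.1.const_mul (Real.exp a * Real.exp (a * x)))) measurableSet_Ioi ?_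
        intro y hy
        have hy' : -x < y := hy
        have hy0 : 0 ≤ y := le_of_lt (lt_of_le_of_lt (by linarith : (0:ℝ) ≤ -x) hy')
        have hxy : 0 < x + y := by linarith
        have h1 : 0 ≤ (x + y) ^ (d - 1) := Real.rpow_nonneg (le_of_lt hxy) _
        have h2 : f y ≤ Real.exp a * Real.exp (-(a * y)) := cavity_decay hd hf hanti hy0
        have h3 : Real.exp (a * x) * Real.exp (-(a * (x + y))) = Real.exp (-(a * y)) := by
          rw [← Real.exp_add]; ring_nf
        have : (Real.exp a * Real.exp (a * x)) * G (x + y)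
            = (x + y) ^ (d - 1) * (Real.exp a * Real.exp (-(a * y))) := by
          simp only [hG]; rw [← h3]; ring
        rw [this]
        exact mul_le_mul_of_nonneg_left h2 h1
      have hIval : ∫ y in Ioi (-x), (Real.exp a * Real.exp (a * x)) * G (x + y)
          = Real.exp a * Real.exp (a * x) * K := by
        rw [integral_const_mul, hshift.2]
      have hInonneg : 0 ≤ ∫ y in Ioi (-x), (x + y) ^ (d - 1) * f y := by
        refine setIntegral_nonneg measurableSet_Ioi fun y hy => ?_
        have : 0 ≤ (x + y) ^ (d - 1) := Real.rpow_nonneg (by simp at hy; linarith) _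
        exact mul_nonneg this (hf.2.1 y).1
      -- 1 - exp(-u) ≤ u
      have hexp : 1 - f x ≤ d * ∫ y in Ioi (-x), (x + y) ^ (d - 1) * f y := by
        rw [hf.2.2.2 x]
        have := Real.add_one_le_exp (-(d * ∫ y in Ioi (-x), (x + y) ^ (d - 1) * f y))
        linarith
      have hd0 : (0:ℝ) < d := by linarith
      calc 1 - f x ≤ d * ∫ y in Ioi (-x), (x + y) ^ (d - 1) * f y := hexp
        _ ≤ d * (Real.exp a * Real.exp (a * x) * K) := by
            rw [← hIval]; exact mul_le_mul_of_nonneg_left hmono (le_of_lt hd0)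
        _ = d * (Real.exp a * K) * Real.exp (a * x) := by ring
    -- integrability of the majorant on Iic 0
    have hmajInt : IntegrableOn (fun x : ℝ => d * (Real.exp a * K) * Real.exp (a * x))
        (Iic (0:ℝ)) := by
      have h1 : IntegrableOn (fun x : ℝ => Real.exp (a * x)) (Iic (0:ℝ)) := by
        have h2 : IntegrableOn (fun u : ℝ => Real.exp (-(a * u))) (Ioi (0:ℝ)) := by
          simpa [neg_mul] using exp_neg_integrableOn_Ioi 0 ha0
        have h3 : Integrable ((Ioi (0:ℝ)).indicator (fun u => Real.exp (-(a * u)))) :=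
          (integrable_indicator_iff measurableSet_Ioi).2 h2
        have h4 : Integrable (fun x : ℝ =>
            (Ioi (0:ℝ)).indicator (fun u => Real.exp (-(a * u))) (-x)) := h3.comp_neg
        rw [← integrable_indicator_iff measurableSet_Iic]
        refine h4.mono' ?_ ?_
        · exact ((Real.continuous_exp.comp (continuous_const.mul continuous_id)).measurable
            |>.indicator measurableSet_Iic).aestronglyMeasurable
        · have h0 : ∀ᵐ x : ℝ, x ≠ (0:ℝ) := by
            rw [ae_iff]
            have : {x : ℝ | ¬ x ≠ 0} = {(0:ℝ)} := by ext x; simp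
            rw [this]; exact measure_singleton 0
          filter_upwards [h0] with x hx0
          by_cases hx : x ≤ 0
          · have hx' : x < 0 := lt_of_le_of_ne hx hx0
            rw [indicator_of_mem (mem_Iic.2 hx), indicator_of_mem (mem_Ioi.2 (by linarith)),
              show -(a * -x) = a * x by ring]
            simp [Real.norm_eq_abs, abs_of_nonneg (Real.exp_pos _).le]
          · rw [indicator_of_notMem (by simpa [mem_Iic] using hx)]
            simpa using indicator_nonneg (fun u _ => (Real.exp_pos (-(a*u))).le) (-x)
      exact h1.const_mul _
    refine Integrable.mono' hmajInt
      ((aestronglyMeasurable_const.sub hf.1.aestronglyMeasurable).restrict) ?_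
    filter_upwards [ae_restrict_mem measurableSet_Iic] with x hx
    rw [Real.norm_eq_abs, abs_of_nonneg (by linarith [(hf.2.1 x).2])]
    exact hbound x hx
  -- assemble
  have hIic : IntegrableOn (fun y => f y - (Iic (0:ℝ)).indicator 1 y) (Iic (0:ℝ)) := by
    have hneg : IntegrableOn (fun x => -(1 - f x)) (Iic (0:ℝ)) := honesub.neg
    refine hneg.congr_fun (fun y hy => ?_) measurableSet_Iic
    rw [indicator_of_mem hy, Pi.one_apply]; ring
  have hIoi : IntegrableOn (fun y => f y - (Iic (0:ℝ)).indicator 1 y) (Ioi (0:ℝ)) := by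
    refine hfIoi.congr_fun (fun y hy => ?_) measurableSet_Ioi
    rw [indicator_of_notMem (by simp at hy ⊢; linarith)]; ring
  have := hIic.union hIoi
  rwa [Iic_union_Ioi, integrableOn_univ] at this

/-- The difference of step indicators is integrable with integral `t`. -/
lemma step_diff (t : ℝ) :
    Integrable (fun y => (Iic t).indicator (1 : ℝ → ℝ) y - (Iic (0:ℝ)).indicator 1 y) ∧
    ∫ y, ((Iic t).indicator (1 : ℝ → ℝ) y - (Iic (0:ℝ)).indicator 1 y) = t := by
  rcases le_or_gt 0 t with h | h
  · have he : (fun y => (Iic t).indicator (1 : ℝ → ℝ) y - (Iic (0:ℝ)).indicator 1 y)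
        = (Ioc (0:ℝ) t).indicator 1 := by
      funext y
      by_cases h2 : y ≤ t
      · by_cases h1 : y ≤ 0
        · simp [indicator_apply, mem_Iic, mem_Ioc, h1, h2, not_lt.2 h1]
        · simp [indicator_apply, mem_Iic, mem_Ioc, h1, h2, lt_of_not_ge h1]
      · have h1 : ¬ y ≤ 0 := fun hy => h2 (hy.trans h)
        simp [indicator_apply, mem_Iic, mem_Ioc, h1, h2]
    rw [he]
    have hint : Integrable ((Ioc (0:ℝ) t).indicator (1 : ℝ → ℝ)) := by
      rw [integrable_indicator_iff measurableSet_Ioc]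
      exact integrableOn_const (by rw [Real.volume_Ioc]; exact ENNReal.ofReal_ne_top)
    refine ⟨hint, ?_⟩
    rw [integral_indicator measurableSet_Ioc]
    simp only [Pi.one_apply, setIntegral_const, smul_eq_mul, mul_one]
    rw [measureReal_def, Real.volume_Ioc, ENNReal.toReal_ofReal (by linarith : (0:ℝ) ≤ t - 0)]
    ring
  · have he : (fun y => (Iic t).indicator (1 : ℝ → ℝ) y - (Iic (0:ℝ)).indicator 1 y)
        = fun y => -((Ioc t (0:ℝ)).indicator 1 y) := by
      funext y
      by_cases h2 : y ≤ 0
      · by_cases h1 : y ≤ t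
        · simp [indicator_apply, mem_Iic, mem_Ioc, h1, h2, not_lt.2 h1]
        · simp [indicator_apply, mem_Iic, mem_Ioc, h1, h2, lt_of_not_ge h1]
      · have h1 : ¬ y ≤ t := fun hy => h2 (hy.trans (le_of_lt h))
        simp [indicator_apply, mem_Iic, mem_Ioc, h1, h2]
    rw [he]
    have hint : Integrable ((Ioc t (0:ℝ)).indicator (1 : ℝ → ℝ)) := by
      rw [integrable_indicator_iff measurableSet_Ioc]
      exact integrableOn_const (by rw [Real.volume_Ioc]; exact ENNReal.ofReal_ne_top)
    refine ⟨hint.neg, ?_⟩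
    rw [integral_neg, integral_indicator measurableSet_Ioc]
    simp only [Pi.one_apply, setIntegral_const, smul_eq_mul, mul_one]
    rw [measureReal_def, Real.volume_Ioc, ENNReal.toReal_ofReal (by linarith : (0:ℝ) ≤ 0 - t)]
    ring

/-- for two non-increasing solutions `f, g`, the shift functional
`Δ(t) = ∫_ℝ (f(y-t) - g(y)) dy` is well-defined, continuous, non-decreasing,
and tends to `∓∞` as `t → ∓∞`. -/
theorem cavity_shift_functional (d : ℝ) (hd : 1 < d)
    (f g : ℝ → ℝ) (hf_anti : Antitone f) (hg_anti : Antitone g)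
    (hf : SolvesCavity d f) (hg : SolvesCavity d g) :
    (∀ t : ℝ, Integrable (fun y => f (y - t) - g y)) ∧
    Continuous (fun t : ℝ => ∫ y : ℝ, (f (y - t) - g y)) ∧
    Monotone (fun t : ℝ => ∫ y : ℝ, (f (y - t) - g y)) ∧
    Tendsto (fun t : ℝ => ∫ y : ℝ, (f (y - t) - g y)) atBot atBot ∧
    Tendsto (fun t : ℝ => ∫ y : ℝ, (f (y - t) - g y)) atTop atTop := by
  set φ : ℝ → ℝ := fun y => f y - (Iic (0:ℝ)).indicator 1 y with hφdef
  set ψ : ℝ → ℝ := fun y => g y - (Iic (0:ℝ)).indicator 1 y with hψdef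
  have hφ : Integrable φ := cavity_centered_integrable hd hf hf_anti
  have hψ : Integrable ψ := cavity_centered_integrable hd hg hg_anti
  -- pointwise decomposition
  have hdecomp : ∀ t y : ℝ, f (y - t) - g y =
      (φ (y - t) + ((Iic t).indicator (1 : ℝ → ℝ) y - (Iic (0:ℝ)).indicator 1 y)) - ψ y := by
    intro t y
    have hkey : (Iic (0:ℝ)).indicator (1 : ℝ → ℝ) (y - t) = (Iic t).indicator 1 y := by
      by_cases h : y ≤ t
      · rw [indicator_of_mem (mem_Iic.2 (by linarith : y - t ≤ 0)),
          indicator_of_mem (mem_Iic.2 h)]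
        simp
      · rw [indicator_of_notMem (by simp [mem_Iic]; linarith [lt_of_not_ge h]),
          indicator_of_notMem (by simpa [mem_Iic] using h)]
    simp only [hφdef, hψdef, hkey]; ring
  have hint : ∀ t : ℝ, Integrable (fun y => f (y - t) - g y) := by
    intro t
    have : Integrable (fun y =>
        (φ (y - t) + ((Iic t).indicator (1 : ℝ → ℝ) y - (Iic (0:ℝ)).indicator 1 y)) - ψ y) :=
      (((hφ.comp_sub_right t).add (step_diff t).1).sub hψ)
    exact this.congr (Filter.Eventually.of_forall fun y => (hdecomp t y).symm)
  have hval : ∀ t : ℝ, ∫ y : ℝ, (f (y - t) - g y) = t + ((∫ y, φ y) - ∫ y, ψ y) := by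
    intro t
    have h1 : ∫ y : ℝ, (f (y - t) - g y) = ∫ y : ℝ,
        ((φ (y - t) + ((Iic t).indicator (1 : ℝ → ℝ) y - (Iic (0:ℝ)).indicator 1 y)) - ψ y) :=
      integral_congr_ae (Filter.Eventually.of_forall fun y => hdecomp t y)
    have hA : Integrable (fun y =>
        φ (y - t) + ((Iic t).indicator (1 : ℝ → ℝ) y - (Iic (0:ℝ)).indicator 1 y)) :=
      (hφ.comp_sub_right t).add (step_diff t).1
    have hB : Integrable (fun y : ℝ => φ (y - t)) := hφ.comp_sub_right t
    rw [h1, integral_sub hA hψ, integral_add hB (step_diff t).1, (step_diff t).2,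
      integral_sub_right_eq_self φ t]
    ring
  have heq : (fun t : ℝ => ∫ y : ℝ, (f (y - t) - g y))
      = fun t => t + ((∫ y, φ y) - ∫ y, ψ y) := funext hval
  refine ⟨hint, ?_, ?_, ?_, ?_⟩
  · rw [heq]; exact continuous_id.add continuous_const
  · rw [heq]; exact fun s t hst => by simpa using hst
  · rw [heq]; exact tendsto_atBot_add_const_right _ _ tendsto_id
  · rw [heq]; exact tendsto_atTop_add_const_right _ _ tendsto_id
end
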